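/- arXiv:2109.00487 — 10 statements merged into one kernel-verified Lean document; each statement's English description precedes it below -/
import Mathlib

section
/- Suppose the type distribution γ is absolutely continuous (with respect to Lebesgue measure on ℝ^{N+1}), the allocation space X has more than one element, the instrument space Y has more than one element, and there exists a coordinate i ∈ {1, …, N} such that θ^i is stochastically nonincreasing in θ^0 and the binarizations β(θ^i) and β(θ^0) are not independent. Then there exist admissible utility functions u^A, u^B, v^A, v^B such that some mechanism involving costly screening achieves a strictly higher principal payoff than every mechanism that screens only the productive component (i.e., every mechanism with y ≡ y₀ and (x, t) depending only on θ^A). -/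
open MeasureTheory Set ProbabilityTheory
open scoped ENNReal

noncomputable section

/-- `κ` is a regular conditional distribution of the second coordinate given the
first coordinate, under the joint law `γ`. -/
def IsRCD {A B : Type*} [MeasurableSpace A] [MeasurableSpace B]
    (γ : Measure (A × B)) (κ : Kernel A B) : Prop :=
  IsMarkovKernel κ ∧
    ∀ s : Set (A × B), MeasurableSet s →
      γ s = ∫⁻ a, κ a {b | (a, b) ∈ s} ∂γ.fst

/-- The topological support of a measure on `ℝ`. -/
def MSupport (μ : Measure ℝ) : Set ℝ :=
  {a | ∀ U : Set ℝ, IsOpen U → a ∈ U → 0 < μ U}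

/- ### Auxiliary lemmas -/

lemma msupport_compl_null (μ : Measure ℝ) : μ (MSupport μ)ᶜ = 0 := by
  set S : Set (Set ℝ) := {U | IsOpen U ∧ μ U = 0} with hS
  have hsub : (MSupport μ)ᶜ ⊆ ⋃₀ S := by
    intro a ha
    simp only [MSupport, mem_compl_iff, mem_setOf_eq, not_forall] at ha
    obtain ⟨U, hU, haU, hpos⟩ := ha
    exact ⟨U, ⟨hU, by simpa [pos_iff_ne_zero] using hpos⟩, haU⟩
  obtain ⟨T, hTc, hTS, hTeq⟩ := TopologicalSpace.isOpen_sUnion_countable S (fun U hU => hU.1)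
  have : μ (⋃₀ S) = 0 := by
    rw [← hTeq]
    exact (measure_sUnion_null_iff hTc).2 fun U hU => (hTS hU).2
  exact le_antisymm (le_trans (measure_mono hsub) this.le) zero_le

lemma hyperplane1_null {N : ℕ} (c : ℝ) :
    (volume : Measure (ℝ × (Fin N → ℝ))) {θ | θ.1 = c} = 0 := by
  have : {θ : ℝ × (Fin N → ℝ) | θ.1 = c} = {c} ×ˢ univ := by
    ext θ
    constructor
    · intro h; exact ⟨h, trivial⟩
    · intro h; exact h.1
  rw [this, MeasureTheory.Measure.volume_eq_prod, Measure.prod_prod]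
  simp

lemma hyperplane2_null {N : ℕ} (i : Fin N) (c : ℝ) :
    (volume : Measure (ℝ × (Fin N → ℝ))) {θ | θ.2 i = c} = 0 := by
  have h1 : {f : Fin N → ℝ | f i = c} = Set.pi univ (fun j => if j = i then ({c} : Set ℝ) else univ) := by
    ext f
    simp only [mem_setOf_eq, Set.mem_pi, mem_univ, forall_true_left]
    constructor
    · intro h j; by_cases hj : j = i <;> simp [hj, h]
    · intro h; simpa using h i
  have h2 : (volume : Measure (Fin N → ℝ)) {f | f i = c} = 0 := by
    rw [h1, volume_pi, Measure.pi_pi]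
    exact Finset.prod_eq_zero (Finset.mem_univ i) (by simp)
  have : {θ : ℝ × (Fin N → ℝ) | θ.2 i = c} = univ ×ˢ {f | f i = c} := by
    ext θ; simp [Set.mem_prod]
  rw [this, MeasureTheory.Measure.volume_eq_prod, Measure.prod_prod, h2]
  simp

lemma enn_quarter_add : (1:ℝ≥0∞)/4 + 1/4 = 1/2 := by
  simp only [one_div, ← two_mul]
  rw [show ((4:ℝ≥0∞)) = 2*2 by norm_num]
  rw [ENNReal.mul_inv (by norm_num) (by norm_num)]
  rw [← mul_assoc, ENNReal.mul_inv_cancel (by norm_num) (by norm_num), one_mul]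

lemma enn_half_mul_half : (1:ℝ≥0∞)/2 * (1/2) = 1/4 := by
  simp only [one_div]
  rw [← ENNReal.mul_inv (by norm_num) (by norm_num)]
  norm_num

lemma enn_half_toReal : ((1:ℝ≥0∞)/2).toReal = 1/2 := by
  rw [ENNReal.toReal_div]; norm_num

lemma kernel_quarter {N : ℕ} (γ : Measure (ℝ × (Fin N → ℝ))) [IsProbabilityMeasure γ]
    (i : Fin N) (m0 mi : ℝ) (κ : Kernel ℝ ℝ)
    (hκ : IsRCD (Measure.map (fun θ : ℝ × (Fin N → ℝ) => (θ.1, θ.2 i)) γ) κ)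
    (hmono : ∀ a ∈ MSupport γ.fst, ∀ a' ∈ MSupport γ.fst, a < a' →
        ∀ f : ℝ → ℝ, Measurable f → Monotone f → (∃ M, ∀ b, |f b| ≤ M) →
          ∫ b, f b ∂(κ a') ≤ ∫ b, f b ∂(κ a))
    (hgt : γ {θ : ℝ × (Fin N → ℝ) | m0 < θ.1} = 1/2)
    (hle : γ {θ : ℝ × (Fin N → ℝ) | θ.1 ≤ m0} = 1/2)
    (hi2 : γ {θ : ℝ × (Fin N → ℝ) | mi ≤ θ.2 i} = 1/2) :
    γ {θ : ℝ × (Fin N → ℝ) | m0 < θ.1 ∧ mi ≤ θ.2 i} ≤ 1/4 := by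
  haveI := hκ.1
  set f : ℝ × (Fin N → ℝ) → ℝ × ℝ := fun θ => (θ.1, θ.2 i) with hf_def
  have hf : Measurable f := measurable_fst.prodMk ((measurable_pi_apply i).comp measurable_snd)
  set ν : Measure (ℝ × ℝ) := Measure.map f γ with hν_def
  set μ : Measure ℝ := γ.fst with hμ_def
  have hfst : ν.fst = μ := by
    rw [hν_def, hμ_def, Measure.fst, Measure.fst, Measure.map_map measurable_fst hf]
    rfl
  set G : ℝ → ℝ≥0∞ := fun a => κ a (Ici mi) with hG_def
  have hG : Measurable G := Kernel.measurable_coe κ measurableSet_Ici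
  have hμIoi : μ (Ioi m0) = 1/2 := by
    rw [hμ_def, Measure.fst_apply measurableSet_Ioi]
    exact hgt
  have hμIic : μ (Iic m0) = 1/2 := by
    rw [hμ_def, Measure.fst_apply measurableSet_Iic]
    exact hle
  have hIhigh : γ {θ : ℝ × (Fin N → ℝ) | m0 < θ.1 ∧ mi ≤ θ.2 i}
      = ∫⁻ a in Ioi m0, G a ∂μ := by
    have hs : MeasurableSet (Ioi m0 ×ˢ Ici mi) := measurableSet_Ioi.prod measurableSet_Ici
    have h1 : ν (Ioi m0 ×ˢ Ici mi) = γ {θ : ℝ × (Fin N → ℝ) | m0 < θ.1 ∧ mi ≤ θ.2 i} := by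
      rw [hν_def, Measure.map_apply hf hs]
      rfl
    have h2 := hκ.2 (Ioi m0 ×ˢ Ici mi) hs
    rw [hfst] at h2
    rw [← h1, h2]
    have heq : ∫⁻ a, κ a {b | (a, b) ∈ Ioi m0 ×ˢ Ici mi} ∂μ
        = ∫⁻ a, (Ioi m0).indicator G a ∂μ := by
      refine lintegral_congr fun a => ?_
      by_cases h : m0 < a
      · have h2' : {b | (a, b) ∈ Ioi m0 ×ˢ Ici mi} = Ici mi := by
          ext b; simp [h, Set.mem_prod]
        rw [h2', Set.indicator_of_mem (by exact h : a ∈ Ioi m0)]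
      · have h2' : {b | (a, b) ∈ Ioi m0 ×ˢ Ici mi} = ∅ := by
          ext b; simp [h, Set.mem_prod]
        rw [h2', Set.indicator_of_notMem (by exact h : a ∉ Ioi m0)]
        simp
    rw [heq, lintegral_indicator measurableSet_Ioi]
  have hTot : (1:ℝ≥0∞)/2 = ∫⁻ a, G a ∂μ := by
    have hs : MeasurableSet ((univ : Set ℝ) ×ˢ Ici mi) := MeasurableSet.univ.prod measurableSet_Ici
    have h1 : ν (univ ×ˢ Ici mi) = γ {θ : ℝ × (Fin N → ℝ) | mi ≤ θ.2 i} := by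
      rw [hν_def, Measure.map_apply hf hs]
      congr 1
      ext θ; simp [Set.mem_prod, hf_def]
    have h2 := hκ.2 (univ ×ˢ Ici mi) hs
    rw [hfst] at h2
    rw [← hi2, ← h1, h2]
    congr 1
    funext a
    congr 1
    ext b; simp [Set.mem_prod]
  have hsuppae : ∀ᵐ a ∂μ, a ∈ MSupport μ := by
    rw [Filter.eventually_iff, mem_ae_iff]
    simpa using msupport_compl_null μ
  have hGmono : ∀ a ∈ MSupport μ, ∀ a' ∈ MSupport μ, a < a' → G a' ≤ G a := by
    intro a ha a' ha' hlt'
    set g : ℝ → ℝ := fun b => if mi ≤ b then (1:ℝ) else 0 with hg_def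
    have hgm : Measurable g := Measurable.ite measurableSet_Ici measurable_const measurable_const
    have hgmono : Monotone g := by
      intro b b' hbb'
      simp only [hg_def]
      by_cases h : mi ≤ b
      · simp [h, le_trans h hbb']
      · by_cases h' : mi ≤ b' <;> simp [h, h']
    have hgbd : ∃ M, ∀ b, |g b| ≤ M := ⟨1, fun b => by by_cases h : mi ≤ b <;> simp [hg_def, h]⟩
    have hint : ∀ x : ℝ, ∫ b, g b ∂(κ x) = (κ x (Ici mi)).toReal := by
      intro x
      have : g = (Ici mi).indicator (fun _ => (1:ℝ)) := by
        funext b; simp [hg_def, indicator_apply, mem_Ici]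
      rw [this, integral_indicator_const _ measurableSet_Ici]
      simp
      rfl
    have := hmono a ha a' ha' hlt' g hgm hgmono hgbd
    rw [hint, hint] at this
    exact (ENNReal.toReal_le_toReal (measure_ne_top _ _) (measure_ne_top _ _)).1 this
  set Ihigh := ∫⁻ a in Ioi m0, G a ∂μ with hIhigh_def
  set Ilow := ∫⁻ a in Iic m0, G a ∂μ with hIlow_def
  have step1 : ∀ a ∈ MSupport μ ∩ Iic m0, Ihigh ≤ G a * (1/2) := by
    intro a ⟨hamem, hale⟩
    have hae : ∀ᵐ a' ∂μ.restrict (Ioi m0), G a' ≤ G a := by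
      filter_upwards [ae_restrict_mem measurableSet_Ioi, ae_restrict_of_ae hsuppae]
        with a' ha'1 ha'2
      exact hGmono a hamem a' ha'2 (lt_of_le_of_lt hale ha'1)
    calc Ihigh ≤ ∫⁻ _ in Ioi m0, G a ∂μ := lintegral_mono_ae hae
    _ = G a * (1/2) := by rw [setLIntegral_const, hμIoi]
  have step2 : Ihigh ≤ Ilow := by
    have hae : ∀ᵐ a ∂μ.restrict (Iic m0), Ihigh ≤ G a * (1/2) := by
      filter_upwards [ae_restrict_mem measurableSet_Iic, ae_restrict_of_ae hsuppae]
        with a ha1 ha2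
      exact step1 a ⟨ha2, ha1⟩
    have h1 : Ihigh * (1/2) ≤ Ilow * (1/2) := by
      calc Ihigh * (1/2) = ∫⁻ _ in Iic m0, Ihigh ∂μ := by rw [setLIntegral_const, hμIic]
      _ ≤ ∫⁻ a in Iic m0, G a * (1/2) ∂μ := lintegral_mono_ae hae
      _ = Ilow * (1/2) := lintegral_mul_const _ hG
    exact (ENNReal.mul_le_mul_iff_left (by norm_num) (by norm_num)).1 h1
  have step3 : Ihigh + Ilow = 1/2 := by
    rw [hIhigh_def, hIlow_def, ← compl_Ioi, lintegral_add_compl _ measurableSet_Ioi]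
    exact hTot.symm
  rw [hIhigh]
  have h4 : Ihigh + Ihigh ≤ 1/2 := by
    calc Ihigh + Ihigh ≤ Ihigh + Ilow := add_le_add_right step2 _
    _ = 1/2 := step3
  by_contra hcon
  push_neg at hcon
  have : (1:ℝ≥0∞)/4 + 1/4 < Ihigh + Ihigh := ENNReal.add_lt_add hcon hcon
  rw [enn_quarter_add] at this
  exact absurd h4 (not_le.2 this)

/-- clamp to [0,1] -/
def clamp01 (z : ℝ) : ℝ := max 0 (min 1 z)

lemma clamp01_mono : Monotone clamp01 := fun a b h =>
  max_le_max le_rfl (min_le_min le_rfl h)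

lemma clamp01_nonneg (z : ℝ) : 0 ≤ clamp01 z := le_max_left _ _

lemma clamp01_le_one (z : ℝ) : clamp01 z ≤ 1 :=
  max_le (by norm_num) (min_le_left _ _)

lemma clamp01_of_nonpos {z : ℝ} (h : z ≤ 0) : clamp01 z = 0 := by
  rw [clamp01, max_eq_left]
  exact le_trans (min_le_right _ _) h

lemma clamp01_of_one_le {z : ℝ} (h : 1 ≤ z) : clamp01 z = 1 := by
  rw [clamp01, min_eq_left h, max_eq_right (by norm_num)]

lemma clamp01_cont : Continuous clamp01 :=
  continuous_const.max (continuous_const.min continuous_id)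

variable {N : ℕ} {Y : Type} [MeasurableSpace Y]

/-- A measurable IC and IR mechanism in the two-component screening model (with
integrable transfer, so that the principal's payoff is well defined). -/
def Mechanism (ΘA : Set ℝ) (ΘB : Set (Fin N → ℝ)) (X : Set ℝ)
    (uA : ℝ → ℝ → ℝ) (uB : Y → (Fin N → ℝ) → ℝ)
    (γ : Measure (ℝ × (Fin N → ℝ)))
    (x : ℝ × (Fin N → ℝ) → ℝ) (y : ℝ × (Fin N → ℝ) → Y)
    (t : ℝ × (Fin N → ℝ) → ℝ) : Prop :=
  Measurable x ∧ Measurable y ∧ Measurable t ∧ Integrable t γ ∧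
    (∀ θ ∈ ΘA ×ˢ ΘB, x θ ∈ X) ∧
    (∀ θ ∈ ΘA ×ˢ ΘB, ∀ θ' ∈ ΘA ×ˢ ΘB,
      uA (x θ) θ.1 + uB (y θ) θ.2 - t θ ≥ uA (x θ') θ.1 + uB (y θ') θ.2 - t θ') ∧
    (∀ θ ∈ ΘA ×ˢ ΘB, uA (x θ) θ.1 + uB (y θ) θ.2 - t θ ≥ 0)

/-- The principal's expected payoff. -/
def Payoff (vA : ℝ → ℝ → ℝ) (vB : Y → (Fin N → ℝ) → ℝ)
    (γ : Measure (ℝ × (Fin N → ℝ)))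
    (x : ℝ × (Fin N → ℝ) → ℝ) (y : ℝ × (Fin N → ℝ) → Y)
    (t : ℝ × (Fin N → ℝ) → ℝ) : ℝ :=
  ∫ θ, (vA (x θ) θ.1 + vB (y θ) θ.2 + t θ) ∂γ

/-- A mechanism involves no costly screening: `y ≡ y₀` and `(x, t)` depend only on
the productive type `θ^A`. -/
def NoCostlyScreening (y₀ : Y)
    (x : ℝ × (Fin N → ℝ) → ℝ) (y : ℝ × (Fin N → ℝ) → Y)
    (t : ℝ × (Fin N → ℝ) → ℝ) : Prop :=
  (∀ θ, y θ = y₀) ∧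
    ∀ θ θ' : ℝ × (Fin N → ℝ), θ.1 = θ'.1 → x θ = x θ' ∧ t θ = t θ'

set_option maxHeartbeats 4000000 in
open scoped Classical in
/-- **Proposition 1 (partial converse).** If the type distribution is absolutely
continuous, `X` and `Y` each have more than one element, and some costly coordinate
`θ^i` is stochastically nonincreasing in `θ^0` with non-independent binarizations,
then there exist admissible utility functions such that some mechanism involving
costly screening strictly dominates every mechanism screening only the productive
component. -/
theorem stmt2
    (y₀ : Y) (hy₀ : MeasurableSet ({y₀} : Set Y))
    (ΘA : Set ℝ) (ΘB : Set (Fin N → ℝ)) (X : Set ℝ)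
    (hΘA : IsCompact ΘA) (hΘB : IsCompact ΘB) (hX : IsCompact X)
    (γ : Measure (ℝ × (Fin N → ℝ))) (hγp : IsProbabilityMeasure γ)
    (hγsupp : γ ((ΘA ×ˢ ΘB)ᶜ) = 0)
    -- θ is absolutely continuous
    (hac : γ ≪ (volume : Measure (ℝ × (Fin N → ℝ))))
    -- |X| > 1 and |Y| > 1
    (hXnt : Set.Nontrivial X) (hYnt : ∃ y₁ : Y, y₁ ≠ y₀)
    -- the distinguished costly coordinate
    (i : Fin N)
    -- θ^i is stochastically nonincreasing in θ^0
    (hmono : ∃ κ : Kernel ℝ ℝ,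
      IsRCD (Measure.map (fun θ : ℝ × (Fin N → ℝ) => (θ.1, θ.2 i)) γ) κ ∧
      ∀ a ∈ MSupport γ.fst, ∀ a' ∈ MSupport γ.fst, a < a' →
        ∀ f : ℝ → ℝ, Measurable f → Monotone f → (∃ M, ∀ b, |f b| ≤ M) →
          ∫ b, f b ∂(κ a') ≤ ∫ b, f b ∂(κ a))
    -- medians of θ^0 and θ^i
    (m0 mi : ℝ)
    (hm0 : γ {θ : ℝ × (Fin N → ℝ) | m0 < θ.1} = 1 / 2 ∧
           γ {θ : ℝ × (Fin N → ℝ) | θ.1 ≤ m0} = 1 / 2)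
    (hmi : γ {θ : ℝ × (Fin N → ℝ) | mi < θ.2 i} = 1 / 2 ∧
           γ {θ : ℝ × (Fin N → ℝ) | θ.2 i ≤ mi} = 1 / 2)
    -- the binarizations β(θ^i), β(θ^0) are not independent
    (hdep : γ {θ : ℝ × (Fin N → ℝ) | m0 ≤ θ.1 ∧ mi ≤ θ.2 i} ≠
      γ {θ : ℝ × (Fin N → ℝ) | m0 ≤ θ.1} * γ {θ : ℝ × (Fin N → ℝ) | mi ≤ θ.2 i}) :
    ∃ (uA vA : ℝ → ℝ → ℝ) (uB vB : Y → (Fin N → ℝ) → ℝ),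
      -- admissibility of the utility functions
      ContinuousOn (fun p : ℝ × ℝ => uA p.1 p.2) (X ×ˢ ΘA) ∧
      ContinuousOn (fun p : ℝ × ℝ => vA p.1 p.2) (X ×ˢ ΘA) ∧
      Measurable (fun p : Y × (Fin N → ℝ) => uB p.1 p.2) ∧
      Measurable (fun p : Y × (Fin N → ℝ) => vB p.1 p.2) ∧
      (∃ M, ∀ y, ∀ b ∈ ΘB, |uB y b| ≤ M) ∧
      (∃ M, ∀ y, ∀ b ∈ ΘB, |vB y b| ≤ M) ∧
      (∀ b, uB y₀ b = 0) ∧ (∀ b, vB y₀ b = 0) ∧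
      (∀ y : Y, y ≠ y₀ → ∀ b ∈ ΘB, uB y b + vB y b < 0) ∧
      (∀ x ∈ X, ∀ a ∈ ΘA, ∀ a' ∈ ΘA, a ≤ a' → uA x a ≤ uA x a') ∧
      (∀ x ∈ X, ∀ x' ∈ X, x < x' → ∀ a ∈ ΘA, ∀ a' ∈ ΘA, a < a' →
        uA x' a - uA x a < uA x' a' - uA x a') ∧
      (∀ x ∈ X, ∀ x' ∈ X, x < x' → ∀ a ∈ ΘA, ∀ a' ∈ ΘA, a < a' →
        0 < (uA x' a + vA x' a) - (uA x a + vA x a) →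
        0 < (uA x' a' + vA x' a') - (uA x a' + vA x a')) ∧
      (∀ y : Y, ∀ b ∈ ΘB, ∀ b' ∈ ΘB, b ≤ b' → uB y b ≤ uB y b') ∧
      -- a mechanism involving costly screening …
      ∃ x y t, Mechanism ΘA ΘB X uA uB γ x y t ∧
        (∃ θ ∈ ΘA ×ˢ ΘB, y θ ≠ y₀) ∧
        -- … strictly dominates every mechanism screening only the productive
        -- component
        ∀ x' y' t', Mechanism ΘA ΘB X uA uB γ x' y' t' →
          NoCostlyScreening y₀ x' y' t' →
          Payoff vA vB γ x' y' t' < Payoff vA vB γ x y t := by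
  obtain ⟨y₁, hy₁⟩ := hYnt
  obtain ⟨κ, hκ, hκmono⟩ := hmono
  -- basic facts about the support
  set Ω : Set (ℝ × (Fin N → ℝ)) := ΘA ×ˢ ΘB with hΩdef
  have hΩmeas : MeasurableSet Ω :=
    (hΘA.isClosed.measurableSet).prod (hΘB.isClosed.measurableSet)
  have hΩae : ∀ᵐ θ ∂γ, θ ∈ Ω := by
    rw [Filter.eventually_iff, mem_ae_iff]
    simpa using hγsupp
  have hΩ1 : γ Ω = 1 := (prob_compl_eq_zero_iff hΩmeas).1 hγsupp
  have hΩne : Ω.Nonempty := by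
    rcases Set.eq_empty_or_nonempty Ω with h | h
    · rw [h] at hΩ1; simp at hΩ1
    · exact h
  have hΘAne : ΘA.Nonempty := ⟨hΩne.choose.1, hΩne.choose_spec.1⟩
  -- medians and null boundaries
  have h1null : γ {θ : ℝ × (Fin N → ℝ) | θ.1 = m0} = 0 := hac (hyperplane1_null m0)
  have hinull : γ {θ : ℝ × (Fin N → ℝ) | θ.2 i = mi} = 0 := hac (hyperplane2_null i mi)
  have hgtod : γ {θ : ℝ × (Fin N → ℝ) | mi ≤ θ.2 i} = 1/2 := by
    apply le_antisymm
    · calc γ {θ : ℝ × (Fin N → ℝ) | mi ≤ θ.2 i}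
          ≤ γ ({θ : ℝ × (Fin N → ℝ) | mi < θ.2 i} ∪ {θ | θ.2 i = mi}) := by
            apply measure_mono
            intro θ h
            simp only [mem_setOf_eq] at h
            simp only [mem_union, mem_setOf_eq]
            rcases lt_or_eq_of_le h with h' | h'
            · exact Or.inl h'
            · exact Or.inr h'.symm
      _ ≤ γ {θ : ℝ × (Fin N → ℝ) | mi < θ.2 i} + γ {θ | θ.2 i = mi} := measure_union_le _ _
      _ = 1/2 := by rw [hmi.1, hinull, add_zero]
    · rw [← hmi.1]
      refine measure_mono fun θ h => ?_
      simp only [mem_setOf_eq] at h ⊢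
      exact le_of_lt h
  have hge0 : γ {θ : ℝ × (Fin N → ℝ) | m0 ≤ θ.1} = 1/2 := by
    apply le_antisymm
    · calc γ {θ : ℝ × (Fin N → ℝ) | m0 ≤ θ.1}
          ≤ γ ({θ : ℝ × (Fin N → ℝ) | m0 < θ.1} ∪ {θ | θ.1 = m0}) := by
            apply measure_mono
            intro θ h
            simp only [mem_setOf_eq] at h
            simp only [mem_union, mem_setOf_eq]
            rcases lt_or_eq_of_le h with h' | h'
            · exact Or.inl h'
            · exact Or.inr h'.symm
      _ ≤ γ {θ : ℝ × (Fin N → ℝ) | m0 < θ.1} + γ {θ | θ.1 = m0} := measure_union_le _ _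
      _ = 1/2 := by rw [hm0.1, h1null, add_zero]
    · rw [← hm0.1]
      refine measure_mono fun θ h => ?_
      simp only [mem_setOf_eq] at h ⊢
      exact le_of_lt h
  have hJeq : γ {θ : ℝ × (Fin N → ℝ) | m0 ≤ θ.1 ∧ mi ≤ θ.2 i}
      = γ {θ : ℝ × (Fin N → ℝ) | m0 < θ.1 ∧ mi ≤ θ.2 i} := by
    apply le_antisymm
    · calc γ {θ : ℝ × (Fin N → ℝ) | m0 ≤ θ.1 ∧ mi ≤ θ.2 i}
          ≤ γ ({θ : ℝ × (Fin N → ℝ) | m0 < θ.1 ∧ mi ≤ θ.2 i} ∪ {θ | θ.1 = m0}) := by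
            apply measure_mono
            intro θ h
            simp only [mem_setOf_eq] at h
            simp only [mem_union, mem_setOf_eq]
            rcases lt_or_eq_of_le h.1 with h' | h'
            · exact Or.inl ⟨h', h.2⟩
            · exact Or.inr h'.symm
      _ ≤ γ {θ : ℝ × (Fin N → ℝ) | m0 < θ.1 ∧ mi ≤ θ.2 i} + γ {θ | θ.1 = m0} :=
            measure_union_le _ _
      _ = _ := by rw [h1null, add_zero]
    · refine measure_mono fun θ h => ?_
      simp only [mem_setOf_eq] at h ⊢
      exact ⟨le_of_lt h.1, h.2⟩
  have hne14 : γ {θ : ℝ × (Fin N → ℝ) | m0 < θ.1 ∧ mi ≤ θ.2 i} ≠ 1/4 := by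
    intro h
    apply hdep
    rw [hJeq, h, hge0, hgtod, enn_half_mul_half]
  have hle14 := kernel_quarter γ i m0 mi κ hκ hκmono hm0.1 hm0.2 hgtod
  have hlt14 : γ {θ : ℝ × (Fin N → ℝ) | m0 < θ.1 ∧ mi ≤ θ.2 i} < 1/4 :=
    lt_of_le_of_ne hle14 hne14
  set r' : ℝ := (γ {θ : ℝ × (Fin N → ℝ) | m0 < θ.1 ∧ mi ≤ θ.2 i}).toReal with hr'def
  have hr0 : 0 ≤ r' := ENNReal.toReal_nonneg
  have hrlt : r' < 1/4 := by
    have h4 : ((1:ℝ≥0∞)/4).toReal = 1/4 := by rw [ENNReal.toReal_div]; norm_num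
    rw [hr'def, ← h4]
    exact ENNReal.toReal_strict_mono (by norm_num) hlt14
  set Δ : ℝ := 1/4 - r' with hΔdef
  have hΔ : 0 < Δ := by rw [hΔdef]; linarith
  have hΔ4 : Δ ≤ 1/4 := by rw [hΔdef]; linarith
  -- choice of the band width δ
  have hδex : ∃ δ : ℝ, 0 < δ ∧
      (γ {θ : ℝ × (Fin N → ℝ) | m0 < θ.1 ∧ θ.1 < m0 + δ}).toReal ≤ Δ/10 := by
    set S : ℕ → Set (ℝ × (Fin N → ℝ)) :=
      fun n => {θ | m0 < θ.1 ∧ θ.1 < m0 + 1/(n+1)} with hSdef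
    have hSmeas : ∀ n, MeasurableSet (S n) := by
      intro n
      exact (measurable_fst measurableSet_Ioi).inter (measurable_fst measurableSet_Iio)
    have hanti : Antitone S := by
      intro n m hnm θ hθ
      refine ⟨hθ.1, lt_of_lt_of_le hθ.2 ?_⟩
      have h1 : (1:ℝ)/(m+1) ≤ 1/(n+1) := by
        apply one_div_le_one_div_of_le (by positivity)
        exact_mod_cast Nat.succ_le_succ hnm
      linarith
    have hempty : ⋂ n, S n = ∅ := by
      ext θ
      simp only [mem_iInter, mem_empty_iff_false, iff_false, not_forall]
      by_cases h : m0 < θ.1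
      · obtain ⟨n, hn⟩ := exists_nat_one_div_lt (show (0:ℝ) < θ.1 - m0 by linarith)
        refine ⟨n, fun hc => ?_⟩
        have := hc.2
        rw [hSdef] at hc
        simp only [mem_setOf_eq] at hc
        linarith [hc.2]
      · exact ⟨0, fun hc => h hc.1⟩
    have htend := tendsto_measure_iInter_atTop (μ := γ)
      (fun n => (hSmeas n).nullMeasurableSet) hanti ⟨0, measure_ne_top _ _⟩
    rw [hempty, measure_empty] at htend
    have hpos : (0:ℝ≥0∞) < ENNReal.ofReal (Δ/10) := ENNReal.ofReal_pos.2 (by linarith)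
    obtain ⟨n, hn⟩ := (htend.eventually_lt_const hpos).exists
    refine ⟨1/(n+1), by positivity, ?_⟩
    exact ENNReal.toReal_le_of_le_ofReal (by linarith) hn.le
  obtain ⟨δ, hδ, hmδle⟩ := hδex
  set mδ : ℝ := (γ {θ : ℝ × (Fin N → ℝ) | m0 < θ.1 ∧ θ.1 < m0 + δ}).toReal with hmδdef
  have hmδ0 : 0 ≤ mδ := ENNReal.toReal_nonneg
  -- geometric data
  have hXne : X.Nonempty := hXnt.nonempty
  set xm : ℝ := sInf X with hxmdef
  set xp : ℝ := sSup X with hxpdef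
  have hxmX : xm ∈ X := hX.sInf_mem hXne
  have hxpX : xp ∈ X := hX.sSup_mem hXne
  have hxbd : ∀ x ∈ X, xm ≤ x ∧ x ≤ xp := fun x hx =>
    ⟨csInf_le hX.bddBelow hx, le_csSup hX.bddAbove hx⟩
  have hxmp : xm < xp := by
    obtain ⟨p, hp, q, hq, hpq⟩ := hXnt
    rcases lt_or_gt_of_ne hpq with h | h
    · exact lt_of_le_of_lt (hxbd p hp).1 (lt_of_lt_of_le h (hxbd q hq).2)
    · exact lt_of_le_of_lt (hxbd q hq).1 (lt_of_lt_of_le h (hxbd p hp).2)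
  set gf : ℝ → ℝ := fun x => (x - xm)/(xp - xm) with hgfdef
  have hxpm : 0 < xp - xm := by linarith
  have hgf0 : gf xm = 0 := by simp [hgfdef]
  have hgf1 : gf xp = 1 := div_self (ne_of_gt hxpm)
  have hgf01 : ∀ x ∈ X, 0 ≤ gf x ∧ gf x ≤ 1 := by
    intro x hx
    constructor
    · apply div_nonneg _ hxpm.le
      linarith [(hxbd x hx).1]
    · rw [div_le_one hxpm]
      linarith [(hxbd x hx).2]
  have hgfmono : ∀ x x' : ℝ, x < x' → gf x < gf x' := by
    intro x x' h
    rw [hgfdef]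
    apply div_lt_div_of_pos_right (by linarith) hxpm
  -- type-space data
  set a₀ : ℝ := sInf ΘA with ha₀def
  set a₁ : ℝ := sSup ΘA with ha₁def
  have habd : ∀ a ∈ ΘA, a₀ ≤ a ∧ a ≤ a₁ := fun a ha =>
    ⟨csInf_le hΘA.bddBelow ha, le_csSup hΘA.bddAbove ha⟩
  set D : ℝ := a₁ - a₀ with hDdef
  have hD0 : 0 ≤ D := by
    obtain ⟨a, ha⟩ := hΘAne
    have := habd a ha
    rw [hDdef]; linarith [this.1, this.2]
  set ε₂ : ℝ := Δ/(20*(D+1)) with hε₂def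
  have hε₂ : 0 < ε₂ := by
    rw [hε₂def]; positivity
  set η : ℝ := ε₂ * D with hηdef
  have hη0 : 0 ≤ η := mul_nonneg hε₂.le hD0
  have hηΔ : η ≤ Δ/20 := by
    rw [hηdef, hε₂def, div_mul_eq_mul_div, div_le_div_iff₀ (by positivity) (by norm_num)]
    nlinarith
  have hη1 : η ≤ 1 := by linarith
  set ε₃ : ℝ := Δ/10 with hε₃def
  have hε₃ : 0 < ε₃ := by rw [hε₃def]; linarith
  -- the valuation function ψ
  set ψ : ℝ → ℝ := fun a => 1 + clamp01 ((a - m0)/δ) + ε₂ * (a - a₀) with hψdef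
  have hψcont : Continuous ψ := by
    rw [hψdef]
    exact (continuous_const.add (clamp01_cont.comp
      ((continuous_id.sub continuous_const).div_const δ))).add
      (continuous_const.mul (continuous_id.sub continuous_const))
  have hψmono : Monotone ψ := by
    intro a a' h
    simp only [hψdef]
    have h1 : clamp01 ((a - m0)/δ) ≤ clamp01 ((a' - m0)/δ) :=
      clamp01_mono (by exact (div_le_div_iff_of_pos_right hδ).2 (by linarith))
    nlinarith
  have hψstrict : ∀ a a' : ℝ, a < a' → ψ a < ψ a' := by
    intro a a' h
    have h1 : clamp01 ((a - m0)/δ) ≤ clamp01 ((a' - m0)/δ) :=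
      clamp01_mono (by exact (div_le_div_iff_of_pos_right hδ).2 (by linarith))
    simp only [hψdef]
    nlinarith
  have hψ1 : ∀ a ∈ ΘA, 1 ≤ ψ a := by
    intro a ha
    simp only [hψdef]
    have := clamp01_nonneg ((a - m0)/δ)
    have h2 : 0 ≤ ε₂ * (a - a₀) := mul_nonneg hε₂.le (by linarith [(habd a ha).1])
    linarith
  have hψ2 : ∀ a ∈ ΘA, ψ a ≤ 2 + η := by
    intro a ha
    simp only [hψdef]
    have := clamp01_le_one ((a - m0)/δ)
    have h2 : ε₂ * (a - a₀) ≤ η := by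
      rw [hηdef, hDdef]
      have := (habd a ha).2
      nlinarith
    linarith
  have hψlow : ∀ a ∈ ΘA, a ≤ m0 → ψ a ≤ 1 + η := by
    intro a ha h
    simp only [hψdef]
    rw [clamp01_of_nonpos (div_nonpos_of_nonpos_of_nonneg (by linarith) hδ.le)]
    have h2 : ε₂ * (a - a₀) ≤ η := by
      rw [hηdef, hDdef]
      have := (habd a ha).2
      nlinarith
    linarith
  have hψhigh : ∀ a ∈ ΘA, m0 + δ ≤ a → 2 ≤ ψ a := by
    intro a ha h
    simp only [hψdef]
    rw [clamp01_of_one_le (by rw [le_div_iff₀ hδ]; linarith)]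
    have h2 : 0 ≤ ε₂ * (a - a₀) := mul_nonneg hε₂.le (by linarith [(habd a ha).1])
    linarith
  
  -- utility functions
  set uAf : ℝ → ℝ → ℝ := fun x a => gf x * ψ a with huAdef
  set vAf : ℝ → ℝ → ℝ := fun _ _ => 0 with hvAdef
  set uBf : Y → (Fin N → ℝ) → ℝ :=
    fun y b => if y = y₀ then 0 else if mi ≤ b i then 0 else -1 with huBdef
  set vBf : Y → (Fin N → ℝ) → ℝ := fun y b => if y = y₀ then 0 else -ε₃ with hvBdef
  have huB0 : ∀ b, uBf y₀ b = 0 := by intro b; simp [huBdef]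
  have hvB0 : ∀ b, vBf y₀ b = 0 := by intro b; simp [hvBdef]
  -- the mechanism
  set xf : ℝ × (Fin N → ℝ) → ℝ :=
    fun θ => if mi ≤ θ.2 i ∨ 2 ≤ ψ θ.1 then xp else xm with hxfdef
  set yf : ℝ × (Fin N → ℝ) → Y := fun θ => if mi ≤ θ.2 i then y₁ else y₀ with hyfdef
  set tf : ℝ × (Fin N → ℝ) → ℝ :=
    fun θ => if mi ≤ θ.2 i then 1 else if 2 ≤ ψ θ.1 then 2 else 0 with htfdef
  have hset1 : MeasurableSet {θ : ℝ × (Fin N → ℝ) | mi ≤ θ.2 i} :=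
    ((measurable_pi_apply i).comp measurable_snd) measurableSet_Ici
  have hset2 : MeasurableSet {θ : ℝ × (Fin N → ℝ) | 2 ≤ ψ θ.1} :=
    (hψcont.measurable.comp measurable_fst) measurableSet_Ici
  have hS2meas : MeasurableSet {θ : ℝ × (Fin N → ℝ) | ¬ mi ≤ θ.2 i ∧ 2 ≤ ψ θ.1} :=
    (hset1.compl).inter hset2
  -- incentive compatibility of our mechanism
  have hICours : ∀ θ ∈ Ω, ∀ θ' ∈ Ω,
      uAf (xf θ) θ.1 + uBf (yf θ) θ.2 - tf θ ≥ uAf (xf θ') θ.1 + uBf (yf θ') θ.2 - tf θ' := by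
    intro θ hθ θ' hθ'
    have h1 : 1 ≤ ψ θ.1 := hψ1 _ hθ.1
    by_cases c1 : mi ≤ θ.2 i <;> by_cases d1 : mi ≤ θ'.2 i <;>
      by_cases c2 : 2 ≤ ψ θ.1 <;> by_cases d2 : 2 ≤ ψ θ'.1 <;>
      simp only [hxfdef, hyfdef, htfdef, huAdef, huBdef, c1, d1, c2, d2, hy₁,
        if_true, if_false, ite_true, ite_false, or_true, true_or, or_self, or_false,
        false_or, not_false_iff, eq_self_iff_true, hgf0, hgf1, one_mul, zero_mul,
        ge_iff_le] <;>
      first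
        | linarith only [h1]
        | linarith only [h1, not_le.1 c2]
        | linarith only [h1, not_le.1 d2]
        | linarith only [h1, not_le.1 c2, not_le.1 d2]
        | linarith only [h1, c2]
        | linarith only [h1, d2]
        | linarith only [h1, c2, d2]
        | linarith only [h1, c2, not_le.1 d2]
        | linarith only [h1, d2, not_le.1 c2]
  have hIRours : ∀ θ ∈ Ω, uAf (xf θ) θ.1 + uBf (yf θ) θ.2 - tf θ ≥ 0 := by
    intro θ hθ
    have h1 : 1 ≤ ψ θ.1 := hψ1 _ hθ.1
    by_cases c1 : mi ≤ θ.2 i <;> by_cases c2 : 2 ≤ ψ θ.1 <;>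
      simp only [hxfdef, hyfdef, htfdef, huAdef, huBdef, c1, c2, hy₁,
        if_true, if_false, ite_true, ite_false, or_true, true_or, or_self, or_false,
        false_or, not_false_iff, eq_self_iff_true, hgf0, hgf1, one_mul, zero_mul,
        ge_iff_le] <;>
      first
        | linarith only [h1]
        | linarith only [h1, c2]
        | linarith only [h1, not_le.1 c2]
  have hmechours : Mechanism ΘA ΘB X uAf uBf γ xf yf tf := by
    refine ⟨?_, ?_, ?_, ?_, ?_, hICours, hIRours⟩
    · exact Measurable.ite (hset1.union hset2) measurable_const measurable_const
    · exact Measurable.ite hset1 measurable_const measurable_const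
    · exact Measurable.ite hset1 measurable_const
        (Measurable.ite hset2 measurable_const measurable_const)
    · refine Integrable.mono' (integrable_const (2:ℝ))
        (Measurable.aestronglyMeasurable ?_) (ae_of_all _ fun θ => ?_)
      · exact Measurable.ite hset1 measurable_const
          (Measurable.ite hset2 measurable_const measurable_const)
      · simp only [htfdef, Real.norm_eq_abs]
        split_ifs <;> rw [abs_of_nonneg (by norm_num)] <;> norm_num
    · intro θ hθ
      simp only [hxfdef]
      split_ifs
      · exact hxpX
      · exact hxmX
  -- our mechanism really uses the costly instrument
  have hwitness : ∃ θ ∈ Ω, yf θ ≠ y₀ := by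
    have hpos : γ ({θ : ℝ × (Fin N → ℝ) | mi ≤ θ.2 i} ∩ Ω) ≠ 0 := by
      intro h0
      have hsub : {θ : ℝ × (Fin N → ℝ) | mi ≤ θ.2 i}
          ⊆ ({θ : ℝ × (Fin N → ℝ) | mi ≤ θ.2 i} ∩ Ω) ∪ Ωᶜ := by
        intro θ hθ
        by_cases hΩ' : θ ∈ Ω
        · exact Or.inl ⟨hθ, hΩ'⟩
        · exact Or.inr hΩ'
      have : (1:ℝ≥0∞)/2 ≤ 0 := by
        calc (1:ℝ≥0∞)/2 = γ {θ : ℝ × (Fin N → ℝ) | mi ≤ θ.2 i} := hgtod.symm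
        _ ≤ γ (({θ : ℝ × (Fin N → ℝ) | mi ≤ θ.2 i} ∩ Ω) ∪ Ωᶜ) := measure_mono hsub
        _ ≤ γ ({θ : ℝ × (Fin N → ℝ) | mi ≤ θ.2 i} ∩ Ω) + γ Ωᶜ := measure_union_le _ _
        _ = 0 := by rw [h0, hγsupp, add_zero]
      simp at this
    obtain ⟨θ, hθ⟩ := nonempty_of_measure_ne_zero hpos
    refine ⟨θ, hθ.2, ?_⟩
    have h1 : yf θ = y₁ := by
      simp only [hyfdef]
      exact if_pos hθ.1
    rw [h1]
    exact hy₁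
  -- lower bound on our payoff
  have hS1half : (γ {θ : ℝ × (Fin N → ℝ) | mi ≤ θ.2 i}).toReal = 1/2 := by
    rw [hgtod]; exact enn_half_toReal
  have hS2low : 1/2 - r' - mδ ≤ (γ {θ : ℝ × (Fin N → ℝ) | ¬ mi ≤ θ.2 i ∧ 2 ≤ ψ θ.1}).toReal := by
    have hsub : {θ : ℝ × (Fin N → ℝ) | m0 < θ.1} ∩ Ω
        ⊆ ({θ : ℝ × (Fin N → ℝ) | ¬ mi ≤ θ.2 i ∧ 2 ≤ ψ θ.1}
          ∪ {θ : ℝ × (Fin N → ℝ) | m0 < θ.1 ∧ θ.1 < m0 + δ})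
          ∪ {θ : ℝ × (Fin N → ℝ) | m0 < θ.1 ∧ mi ≤ θ.2 i} := by
      rintro θ ⟨hθ1, hθΩ⟩
      by_cases c1 : mi ≤ θ.2 i
      · exact Or.inr ⟨hθ1, c1⟩
      · by_cases c3 : θ.1 < m0 + δ
        · exact Or.inl (Or.inr ⟨hθ1, c3⟩)
        · exact Or.inl (Or.inl ⟨c1, hψhigh _ hθΩ.1 (not_lt.1 c3)⟩)
    have hENN : (1:ℝ≥0∞)/2 ≤ γ {θ : ℝ × (Fin N → ℝ) | ¬ mi ≤ θ.2 i ∧ 2 ≤ ψ θ.1}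
        + γ {θ : ℝ × (Fin N → ℝ) | m0 < θ.1 ∧ θ.1 < m0 + δ}
        + γ {θ : ℝ × (Fin N → ℝ) | m0 < θ.1 ∧ mi ≤ θ.2 i} := by
      have hstep : γ {θ : ℝ × (Fin N → ℝ) | m0 < θ.1}
          ≤ γ ({θ : ℝ × (Fin N → ℝ) | m0 < θ.1} ∩ Ω) + γ Ωᶜ := by
        calc γ {θ : ℝ × (Fin N → ℝ) | m0 < θ.1}
            ≤ γ (({θ : ℝ × (Fin N → ℝ) | m0 < θ.1} ∩ Ω) ∪ Ωᶜ) := by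
              apply measure_mono
              intro θ hθ
              by_cases hΩ' : θ ∈ Ω
              · exact Or.inl ⟨hθ, hΩ'⟩
              · exact Or.inr hΩ'
        _ ≤ _ := measure_union_le _ _
      calc (1:ℝ≥0∞)/2 = γ {θ : ℝ × (Fin N → ℝ) | m0 < θ.1} := hm0.1.symm
      _ ≤ γ ({θ : ℝ × (Fin N → ℝ) | m0 < θ.1} ∩ Ω) + γ Ωᶜ := hstep
      _ = γ ({θ : ℝ × (Fin N → ℝ) | m0 < θ.1} ∩ Ω) := by rw [hγsupp, add_zero]
      _ ≤ γ (({θ : ℝ × (Fin N → ℝ) | ¬ mi ≤ θ.2 i ∧ 2 ≤ ψ θ.1}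
          ∪ {θ : ℝ × (Fin N → ℝ) | m0 < θ.1 ∧ θ.1 < m0 + δ})
          ∪ {θ : ℝ × (Fin N → ℝ) | m0 < θ.1 ∧ mi ≤ θ.2 i}) := measure_mono hsub
      _ ≤ γ ({θ : ℝ × (Fin N → ℝ) | ¬ mi ≤ θ.2 i ∧ 2 ≤ ψ θ.1}
          ∪ {θ : ℝ × (Fin N → ℝ) | m0 < θ.1 ∧ θ.1 < m0 + δ})
          + γ {θ : ℝ × (Fin N → ℝ) | m0 < θ.1 ∧ mi ≤ θ.2 i} := measure_union_le _ _
      _ ≤ _ := by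
        gcongr
        exact measure_union_le _ _
    have hfin1 : γ {θ : ℝ × (Fin N → ℝ) | ¬ mi ≤ θ.2 i ∧ 2 ≤ ψ θ.1} ≠ ⊤ := measure_ne_top _ _
    have hfin2 : γ {θ : ℝ × (Fin N → ℝ) | m0 < θ.1 ∧ θ.1 < m0 + δ} ≠ ⊤ := measure_ne_top _ _
    have hfin3 : γ {θ : ℝ × (Fin N → ℝ) | m0 < θ.1 ∧ mi ≤ θ.2 i} ≠ ⊤ := measure_ne_top _ _
    have htr := ENNReal.toReal_mono (by finiteness) hENN
    rw [enn_half_toReal, ENNReal.toReal_add (by finiteness) hfin3,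
      ENNReal.toReal_add hfin1 hfin2] at htr
    rw [hmδdef, hr'def]
    linarith only [htr]
  have hintS1 : Integrable
      (({θ : ℝ × (Fin N → ℝ) | mi ≤ θ.2 i}).indicator fun _ => (1 - ε₃ : ℝ)) γ :=
    (integrable_const _).indicator hset1
  have hintS2 : Integrable
      (({θ : ℝ × (Fin N → ℝ) | ¬ mi ≤ θ.2 i ∧ 2 ≤ ψ θ.1}).indicator fun _ => (2 : ℝ)) γ :=
    (integrable_const _).indicator hS2meas
  have hpayours : 3/2 - 2*r' - 2*mδ - ε₃ ≤ Payoff vAf vBf γ xf yf tf := by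
    have hint_eq : (fun θ : ℝ × (Fin N → ℝ) => vAf (xf θ) θ.1 + vBf (yf θ) θ.2 + tf θ)
        = fun θ => ({θ : ℝ × (Fin N → ℝ) | mi ≤ θ.2 i}).indicator (fun _ => (1 - ε₃ : ℝ)) θ
          + ({θ : ℝ × (Fin N → ℝ) | ¬ mi ≤ θ.2 i ∧ 2 ≤ ψ θ.1}).indicator (fun _ => (2:ℝ)) θ := by
      funext θ
      by_cases c1 : mi ≤ θ.2 i
      · simp only [hvAdef, hvBdef, hyfdef, htfdef, c1, ite_true, if_true,
          indicator_apply, mem_setOf_eq, not_true, false_and, if_false, ite_false, hy₁,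
          if_neg hy₁]
        ring
      · by_cases c2 : 2 ≤ ψ θ.1 <;>
          simp only [hvAdef, hvBdef, hyfdef, htfdef, c1, c2, ite_true, ite_false,
            if_true, if_false, indicator_apply, mem_setOf_eq, not_false_iff, true_and,
            and_true, and_false, if_pos rfl] <;>
          norm_num
    have hval : Payoff vAf vBf γ xf yf tf
        = (γ {θ : ℝ × (Fin N → ℝ) | mi ≤ θ.2 i}).toReal * (1 - ε₃)
          + (γ {θ : ℝ × (Fin N → ℝ) | ¬ mi ≤ θ.2 i ∧ 2 ≤ ψ θ.1}).toReal * 2 := by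
      simp only [Payoff]
      rw [hint_eq, integral_add hintS1 hintS2, integral_indicator_const _ hset1,
        integral_indicator_const _ hS2meas, smul_eq_mul, smul_eq_mul]
      rfl
    rw [hval, hS1half]
    linarith only [hS2low, hε₃]
  refine ⟨uAf, vAf, uBf, vBf, ?_, ?_, ?_, ?_, ?_, ?_, huB0, hvB0, ?_, ?_, ?_, ?_, ?_,
    xf, yf, tf, hmechours, hwitness, ?_⟩
  -- continuity of uA
  · have : Continuous fun p : ℝ × ℝ => uAf p.1 p.2 := by
      simp only [huAdef]
      exact ((continuous_fst.sub continuous_const).div_const _).mul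
        (hψcont.comp continuous_snd)
    exact this.continuousOn
  · exact continuousOn_const
  -- measurability of uB
  · simp only [huBdef]
    refine Measurable.ite ?_ measurable_const (Measurable.ite ?_ measurable_const
      measurable_const)
    · exact measurable_fst hy₀
    · exact ((measurable_pi_apply i).comp measurable_snd) measurableSet_Ici
  · simp only [hvBdef]
    exact Measurable.ite (measurable_fst hy₀) measurable_const measurable_const
  -- boundedness
  · refine ⟨1, fun y b _ => ?_⟩
    simp only [huBdef]
    split_ifs <;> norm_num
  · refine ⟨ε₃, fun y b _ => ?_⟩
    simp only [hvBdef]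
    split_ifs <;> simp [abs_of_pos hε₃, hε₃.le]
  -- total surplus of the costly instruments is negative
  · intro y hy b _
    simp only [huBdef, hvBdef, if_neg hy]
    split_ifs <;> linarith only [hε₃]
  -- uA nondecreasing in a
  · intro x hx a _ a' _ haa'
    simp only [huAdef]
    exact mul_le_mul_of_nonneg_left (hψmono haa') (hgf01 x hx).1
  -- strict increasing differences
  · intro x hx x' hx' hxx' a _ a' _ haa'
    simp only [huAdef]
    have h1 := mul_pos (sub_pos.2 (hgfmono x x' hxx')) (sub_pos.2 (hψstrict a a' haa'))
    linarith only [h1]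
  -- weak single-crossing of the total surplus
  · intro x hx x' hx' hxx' a ha a' ha' haa' hpos
    simp only [huAdef, hvAdef, add_zero] at hpos ⊢
    have h1 : 0 < ψ a' := lt_of_lt_of_le (by norm_num) (hψ1 a' ha')
    have h2 := mul_pos (sub_pos.2 (hgfmono x x' hxx')) h1
    linarith only [h2]
  -- uB nondecreasing in b
  · intro y b _ b' _ hbb'
    simp only [huBdef]
    by_cases hyy : y = y₀
    · simp [hyy]
    · simp only [if_neg hyy]
      by_cases h : mi ≤ b i
      · rw [if_pos h, if_pos (le_trans h (hbb' i))]
      · split_ifs <;> norm_num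
  -- strict dominance over every no-costly-screening mechanism
  · intro x' y' t' hM hN
    obtain ⟨hxm', hym', htm', hint', hrange', hIC', hIR'⟩ := hM
    have hPay' : Payoff vAf vBf γ x' y' t' = ∫ θ, t' θ ∂γ := by
      have hfun : (fun θ : ℝ × (Fin N → ℝ) => vAf (x' θ) θ.1 + vBf (y' θ) θ.2 + t' θ)
          = fun θ => t' θ := by
        funext θ
        rw [hN.1 θ, hvB0 θ.2]
        simp only [hvAdef]
        ring
      simp only [Payoff, hfun]
    -- basic bounds from IR
    have hq01 : ∀ θ ∈ Ω, 0 ≤ gf (x' θ) ∧ gf (x' θ) ≤ 1 := fun θ hθ => hgf01 _ (hrange' θ hθ)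
    have hIRbd : ∀ θ ∈ Ω, t' θ ≤ gf (x' θ) * ψ θ.1 := by
      intro θ hθ
      have h := hIR' θ hθ
      rw [hN.1 θ, huB0] at h
      simp only [huAdef] at h
      linarith only [h]
    -- split the transfer integral into the three type regions
    set L : Set (ℝ × (Fin N → ℝ)) := {θ | θ.1 ≤ m0} with hLdef
    set Ms : Set (ℝ × (Fin N → ℝ)) := {θ | m0 < θ.1 ∧ θ.1 < m0 + δ} with hMsdef
    set Fs : Set (ℝ × (Fin N → ℝ)) := {θ | m0 + δ ≤ θ.1} with hFsdef
    have hLmeas : MeasurableSet L := measurable_fst measurableSet_Iic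
    have hMmeas : MeasurableSet Ms :=
      (measurable_fst measurableSet_Ioi).inter (measurable_fst measurableSet_Iio)
    have hFmeas : MeasurableSet Fs := measurable_fst measurableSet_Ici
    set TL : ℝ := ∫ θ in L, t' θ ∂γ with hTLdef
    set TM : ℝ := ∫ θ in Ms, t' θ ∂γ with hTMdef
    set TF : ℝ := ∫ θ in Fs, t' θ ∂γ with hTFdef
    have hLhalf : (γ L).toReal = 1/2 := by rw [hm0.2]; exact enn_half_toReal
    have hsplit : ∫ θ, t' θ ∂γ = TL + (TM + TF) := by
      have hunion : L ∪ (Ms ∪ Fs) = univ := by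
        ext θ
        simp only [hLdef, hMsdef, hFsdef, mem_union, mem_setOf_eq, mem_univ, iff_true]
        by_cases h : θ.1 ≤ m0
        · exact Or.inl h
        · push_neg at h
          by_cases h2 : θ.1 < m0 + δ
          · exact Or.inr (Or.inl ⟨h, h2⟩)
          · exact Or.inr (Or.inr (not_lt.1 h2))
      have hd1 : Disjoint L (Ms ∪ Fs) := by
        rw [Set.disjoint_left]
        intro θ hθL hθR
        simp only [hLdef, mem_setOf_eq] at hθL
        simp only [hMsdef, hFsdef, mem_union, mem_setOf_eq] at hθR
        rcases hθR with h | h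
        · linarith only [hθL, h.1]
        · linarith only [hθL, h, hδ]
      have hd2 : Disjoint Ms Fs := by
        rw [Set.disjoint_left]
        intro θ hθL hθR
        simp only [hMsdef, mem_setOf_eq] at hθL
        simp only [hFsdef, mem_setOf_eq] at hθR
        linarith only [hθL.2, hθR]
      calc ∫ θ, t' θ ∂γ = ∫ θ in univ, t' θ ∂γ := setIntegral_univ.symm
      _ = ∫ θ in L ∪ (Ms ∪ Fs), t' θ ∂γ := by rw [hunion]
      _ = TL + (TM + TF) := by
        rw [setIntegral_union hd1 (hMmeas.union hFmeas) hint'.integrableOn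
            hint'.integrableOn,
          setIntegral_union hd2 hFmeas hint'.integrableOn hint'.integrableOn]
    -- bound on the low region
    have hTLle : TL ≤ (1+η)/2 := by
      have hb : ∀ᵐ θ ∂γ.restrict L, t' θ ≤ 1+η := by
        filter_upwards [ae_restrict_mem hLmeas, ae_restrict_of_ae hΩae] with θ hθL hθΩ
        have h1 := hIRbd θ hθΩ
        have h2 := hq01 θ hθΩ
        have h3 : ψ θ.1 ≤ 1 + η := hψlow _ hθΩ.1 hθL
        have h4 : 0 ≤ ψ θ.1 := le_trans (by norm_num) (hψ1 _ hθΩ.1)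
        have h5 : gf (x' θ) * ψ θ.1 ≤ 1 * (1 + η) := mul_le_mul h2.2 h3 h4 zero_le_one
        linarith only [h1, h5]
      calc TL ≤ ∫ _ in L, (1+η) ∂γ :=
        integral_mono_ae hint'.integrableOn (integrable_const _) hb
      _ = (1+η)/2 := by rw [setIntegral_const, smul_eq_mul, measureReal_def, hLhalf]; ring
    -- bound on the middle band
    have hTMle : TM ≤ (2+η) * mδ := by
      have hb : ∀ᵐ θ ∂γ.restrict Ms, t' θ ≤ 2+η := by
        filter_upwards [ae_restrict_mem hMmeas, ae_restrict_of_ae hΩae] with θ hθM hθΩ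
        have h1 := hIRbd θ hθΩ
        have h2 := hq01 θ hθΩ
        have h3 : ψ θ.1 ≤ 2 + η := hψ2 _ hθΩ.1
        have h4 : 0 ≤ ψ θ.1 := le_trans (by norm_num) (hψ1 _ hθΩ.1)
        have h5 : gf (x' θ) * ψ θ.1 ≤ 1 * (2 + η) := mul_le_mul h2.2 h3 h4 zero_le_one
        linarith only [h1, h5]
      calc TM ≤ ∫ _ in Ms, (2+η) ∂γ :=
        integral_mono_ae hint'.integrableOn (integrable_const _) hb
      _ = (2+η) * mδ := by rw [setIntegral_const, smul_eq_mul, measureReal_def, ← hmδdef]; ring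
    -- bound on the far-high region, using IC against the low region
    set cc : ℝ := (1-η)/(1+η) with hccdef
    have h1η : (0:ℝ) < 1 + η := by linarith
    have hcc0 : 0 ≤ cc := div_nonneg (by linarith) h1η.le
    have hccmul : cc * (1+η) = 1 - η := div_mul_cancel₀ _ (ne_of_gt h1η)
    have hFptw : ∀ θ ∈ Ω, θ ∈ Fs → t' θ ≤ (2+η) - 2*(cc*TL) := by
      intro θ hθΩ hθF
      have hψa : 2 ≤ ψ θ.1 := hψhigh _ hθΩ.1 hθF
      have hψb : ψ θ.1 ≤ 2 + η := hψ2 _ hθΩ.1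
      have hqθ := hq01 θ hθΩ
      have hkey : ∀ᵐ θL ∂γ.restrict L, t' θ ≤ (2+η) - cc * t' θL := by
        filter_upwards [ae_restrict_mem hLmeas, ae_restrict_of_ae hΩae] with θL hθLL hθLΩ
        have hICc := hIC' θ hθΩ θL hθLΩ
        rw [hN.1 θ, hN.1 θL, huB0] at hICc
        simp only [huAdef] at hICc
        have hIRL := hIRbd θL hθLΩ
        have hqL := hq01 θL hθLΩ
        have hψL : ψ θL.1 ≤ 1 + η := hψlow _ hθLΩ.1 hθLL
        have hψL1 : 1 ≤ ψ θL.1 := hψ1 _ hθLΩ.1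
        have hA : t' θL ≤ (1+η) * gf (x' θL) := by
          have h6 : gf (x' θL) * ψ θL.1 ≤ gf (x' θL) * (1 + η) :=
            mul_le_mul_of_nonneg_left hψL hqL.1
          linarith only [hIRL, h6]
        have hB : t' θ ≤ t' θL + (2+η) - 2 * gf (x' θL) := by
          have h6 : gf (x' θ) * ψ θ.1 ≤ 1 * (2 + η) :=
            mul_le_mul hqθ.2 hψb (by linarith) zero_le_one
          have h7 : gf (x' θL) * 2 ≤ gf (x' θL) * ψ θ.1 :=
            mul_le_mul_of_nonneg_left hψa hqL.1
          linarith only [hICc, h6, h7]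
        have hC : (1 + cc) * t' θL ≤ 2 * gf (x' θL) := by
          have h2cc : 1 + cc = 2/(1+η) := by
            rw [hccdef]
            field_simp
            ring
          rw [h2cc, div_mul_eq_mul_div, div_le_iff₀ h1η]
          linarith only [hA]
        linarith only [hB, hC]
      have hi1 : ∫ _ in L, t' θ ∂γ = t' θ * (1/2) := by
        rw [setIntegral_const, smul_eq_mul, measureReal_def, hLhalf]; ring
      have hi2 : ∫ θL in L, ((2+η) - cc * t' θL) ∂γ = (2+η)*(1/2) - cc * TL := by
        rw [integral_sub (integrable_const _) (hint'.integrableOn.const_mul cc),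
          integral_const_mul, setIntegral_const, smul_eq_mul, measureReal_def, hLhalf, ← hTLdef]
        ring
      have hInt2 : Integrable (fun θL : ℝ × (Fin N → ℝ) => (2+η) - cc * t' θL)
          (γ.restrict L) := (integrable_const _).sub (hint'.integrableOn.const_mul cc)
      have hmono2 : (∫ _ in L, t' θ ∂γ) ≤ ∫ θL in L, ((2+η) - cc * t' θL) ∂γ :=
        integral_mono_ae (integrable_const (t' θ)) hInt2 hkey
      rw [hi1, hi2] at hmono2
      linarith only [hmono2]
    have hK0 : 0 ≤ (2+η) - 2*(cc*TL) := by
      have h1 := mul_le_mul_of_nonneg_left hTLle hcc0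
      have h2 : cc * ((1+η)/2) = (cc*(1+η))/2 := by ring
      rw [hccmul] at h2
      linarith only [h1, h2, hη0, hη1]
    have hγF : (γ Fs).toReal ≤ 1/2 := by
      have h1 : γ Fs ≤ γ {θ : ℝ × (Fin N → ℝ) | m0 < θ.1} := by
        apply measure_mono
        intro θ hθ
        simp only [hFsdef, mem_setOf_eq] at hθ
        simp only [mem_setOf_eq]
        linarith only [hθ, hδ]
      calc (γ Fs).toReal ≤ (γ {θ : ℝ × (Fin N → ℝ) | m0 < θ.1}).toReal :=
        ENNReal.toReal_mono (measure_ne_top _ _) h1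
      _ = 1/2 := by rw [hm0.1]; exact enn_half_toReal
    have hTFle : TF ≤ ((2+η) - 2*(cc*TL)) * (1/2) := by
      have hb : ∀ᵐ θ ∂γ.restrict Fs, t' θ ≤ (2+η) - 2*(cc*TL) := by
        filter_upwards [ae_restrict_mem hFmeas, ae_restrict_of_ae hΩae] with θ hθF hθΩ
        exact hFptw θ hθΩ hθF
      calc TF ≤ ∫ _ in Fs, ((2+η) - 2*(cc*TL)) ∂γ :=
        integral_mono_ae hint'.integrableOn (integrable_const _) hb
      _ = ((2+η) - 2*(cc*TL)) * (γ Fs).toReal := by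
        rw [setIntegral_const, smul_eq_mul, measureReal_def]; ring
      _ ≤ _ := by
        apply mul_le_mul_of_nonneg_left _ hK0
        exact hγF
    have hTLub : TL - cc*TL ≤ η := by
      have hcc1 : cc ≤ 1 := by
        rw [hccdef, div_le_one h1η]
        linarith
      have h2 := mul_le_mul_of_nonneg_left hTLle (by linarith : (0:ℝ) ≤ 1 - cc)
      have h3 : (1-cc) * ((1+η)/2) = ((1+η) - cc*(1+η))/2 := by ring
      rw [hccmul] at h3
      linarith only [h2, h3]
    have hNCle : ∫ θ, t' θ ∂γ ≤ 1 + (3/2)*η + 3*mδ := by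
      have h1 : (2+η) * mδ ≤ 3 * mδ :=
        mul_le_mul_of_nonneg_right (by linarith) hmδ0
      have h2 : TF ≤ 1 + η/2 - cc*TL := by linarith only [hTFle]
      rw [hsplit]
      linarith only [h1, h2, hTMle, hTLub]
    rw [hPay']
    calc ∫ θ, t' θ ∂γ ≤ 1 + (3/2)*η + 3*mδ := hNCle
    _ < 3/2 - 2*r' - 2*mδ - ε₃ := by
      have hnum : ∀ e m d rr ee : ℝ, e ≤ d/20 → m ≤ ee → 0 < d → d = 1/4 - rr →
          ee = d/10 → 1 + 3/2*e + 3*m < 3/2 - 2*rr - 2*m - ee := by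
        intro e m d rr ee h1 h2 h3 h4 h5
        linarith only [h1, h2, h3, h4, h5]
      exact hnum η mδ Δ r' ε₃ hηΔ hmδle hΔ hΔdef hε₃def
    _ ≤ Payoff vAf vBf γ xf yf tf := hpayours
end
end

section
/- In the finite one-dimensional screening problem, suppose the surplus function s(x, θ) = u(x, θ) + v(x, θ) has weak single-crossing differences. Then the downward-IC program has the same optimal value as the program with all IC constraints (together with IR), and every optimal solution of the downward-IC program satisfies all IC constraints. -/
open Finset

noncomputable section

/-- Feasibility for the downward-IC program: allocations in `X`, all downward IC
constraints, and all IR constraints. Indices run over `0, …, n-1`. -/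
def DFeas (n : ℕ) (X : Set ℝ) (u : ℝ → ℝ → ℝ) (θ : ℕ → ℝ)
    (x t : ℕ → ℝ) : Prop :=
  (∀ i, i < n → x i ∈ X) ∧
    (∀ i j, j < i → i < n → u (x i) (θ i) - t i ≥ u (x j) (θ i) - t j) ∧
    (∀ i, i < n → u (x i) (θ i) - t i ≥ 0)

/-- Feasibility for the program with all IC constraints and all IR constraints. -/
def FullFeas (n : ℕ) (X : Set ℝ) (u : ℝ → ℝ → ℝ) (θ : ℕ → ℝ)
    (x t : ℕ → ℝ) : Prop :=
  (∀ i, i < n → x i ∈ X) ∧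
    (∀ i j, i < n → j < n → u (x i) (θ i) - t i ≥ u (x j) (θ i) - t j) ∧
    (∀ i, i < n → u (x i) (θ i) - t i ≥ 0)

/-- The principal's objective. -/
def Obj (n : ℕ) (μ : ℕ → ℝ) (v : ℝ → ℝ → ℝ) (θ : ℕ → ℝ) (x t : ℕ → ℝ) : ℝ :=
  ∑ i ∈ range n, μ i * (v (x i) (θ i) + t i)

/-! ### Auxiliary lemmas -/

/-- Continuity of a fold of `min` of finitely many continuous functions. -/
lemma contOn_fold_min {E : Type*} [TopologicalSpace E] (s : Finset ℕ) (b : ℝ)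
    (F : ℕ → E → ℝ) (P : Set E) (hF : ∀ i ∈ s, ContinuousOn (F i) P) :
    ContinuousOn (fun p => s.fold min b (fun i => F i p)) P := by
  induction s using Finset.cons_induction with
  | empty => simpa using continuousOn_const
  | cons a s ha ih =>
    simp only [Finset.fold_cons]
    exact fun p hp => ((hF a (Finset.mem_cons_self a s)) p hp).min
      ((ih fun i hi => hF i (Finset.mem_cons_of_mem hi)) p hp)

/-- Continuity of a finite sum of continuous functions. -/
lemma contOn_finset_sum {E : Type*} [TopologicalSpace E] (s : Finset ℕ)
    (F : ℕ → E → ℝ) (P : Set E) (hF : ∀ i ∈ s, ContinuousOn (F i) P) :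
    ContinuousOn (fun p => ∑ i ∈ s, F i p) P := by
  induction s using Finset.cons_induction with
  | empty => simpa using continuousOn_const
  | cons a s ha ih =>
    simp only [Finset.sum_cons]
    exact (hF a (Finset.mem_cons_self a s)).add
      (ih fun i hi => hF i (Finset.mem_cons_of_mem hi))

/-- At an optimum of the downward-IC program, each type's utility is pinned down by
a binding downward constraint or by IR (envelope condition). -/
lemma env_bind
    {n : ℕ} {X : Set ℝ} {u v : ℝ → ℝ → ℝ} {θ μ : ℕ → ℝ} {x t : ℕ → ℝ}
    (hμpos : ∀ i, i < n → 0 < μ i)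
    (hD : DFeas n X u θ x t)
    (hopt : ∀ x' t' : ℕ → ℝ, DFeas n X u θ x' t' → Obj n μ v θ x' t' ≤ Obj n μ v θ x t)
    {j : ℕ} (hj : j < n) (hUj : 0 < u (x j) (θ j) - t j) :
    ∃ k, k < j ∧ u (x j) (θ j) - t j ≤ u (x k) (θ j) - t k := by
  classical
  by_contra hcon
  push_neg at hcon
  set ε := (range j).fold min (u (x j) (θ j) - t j)
      (fun k => (u (x j) (θ j) - t j) - (u (x k) (θ j) - t k)) with hεdef
  have hε0 : 0 < ε := by
    rw [hεdef]
    refine (Finset.lt_fold_min 0).mpr ⟨hUj, fun k hk => ?_⟩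
    have := hcon k (mem_range.mp hk)
    linarith
  have hεU : ε ≤ u (x j) (θ j) - t j := by
    rw [hεdef]; exact (Finset.fold_min_le _).mpr (Or.inl le_rfl)
  have hεk : ∀ k, k < j → ε ≤ (u (x j) (θ j) - t j) - (u (x k) (θ j) - t k) := by
    intro k hk
    rw [hεdef]
    exact (Finset.fold_min_le _).mpr (Or.inr ⟨k, mem_range.mpr hk, le_rfl⟩)
  set t' := Function.update t j (t j + ε) with ht'
  have ht'j : t' j = t j + ε := by rw [ht']; exact Function.update_self j _ t
  have ht'k : ∀ k, k ≠ j → t' k = t k := by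
    intro k hk
    rw [ht']; exact Function.update_of_ne hk _ t
  have hfeas : DFeas n X u θ x t' := by
    refine ⟨hD.1, ?_, ?_⟩
    · intro a b hba han
      by_cases haj : a = j
      · subst haj
        rw [ht'j, ht'k b (Nat.ne_of_lt hba)]
        have := hεk b hba
        linarith
      · rw [ht'k a haj]
        by_cases hbj : b = j
        · subst hbj
          rw [ht'j]
          have := hD.2.1 a b hba han
          linarith
        · rw [ht'k b hbj]
          exact hD.2.1 a b hba han
    · intro a han
      by_cases haj : a = j
      · subst haj
        rw [ht'j]
        linarith
      · rw [ht'k a haj]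
        exact hD.2.2 a han
  have hlt : Obj n μ v θ x t < Obj n μ v θ x t' := by
    have h1 : Obj n μ v θ x t' - Obj n μ v θ x t
        = ∑ i ∈ range n, μ i * (t' i - t i) := by
      unfold Obj
      rw [← Finset.sum_sub_distrib]
      exact Finset.sum_congr rfl (by intro i _; ring)
    have h2 : ∀ i ∈ range n, μ i * (t' i - t i) = if i = j then μ j * ε else 0 := by
      intro i _
      by_cases hij : i = j
      · rw [if_pos hij]
        subst hij
        rw [ht'j]
        ring
      · rw [if_neg hij, ht'k i hij]
        ring
    rw [Finset.sum_congr rfl h2, Finset.sum_ite_eq' (range n) j,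
      if_pos (mem_range.mpr hj)] at h1
    have := mul_pos (hμpos j hj) hε0
    linarith
  exact absurd (hopt x t' hfeas) (not_le.mpr hlt)

/-- **Main structural lemma**: every optimal solution of the downward-IC program
satisfies all IC constraints. -/
lemma full_ic
    {n : ℕ} {X : Set ℝ} {u v : ℝ → ℝ → ℝ} {θ μ : ℕ → ℝ} {x t : ℕ → ℝ}
    (hθ : ∀ i j, i < j → j < n → θ i < θ j)
    (hμpos : ∀ i, i < n → 0 < μ i)
    (humono : ∀ y ∈ X, Monotone (u y))
    (hSID : ∀ y ∈ X, ∀ y' ∈ X, y < y' → ∀ a a' : ℝ, a < a' →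
      u y' a - u y a < u y' a' - u y a')
    (hWSCD : ∀ y ∈ X, ∀ y' ∈ X, y < y' → ∀ a a' : ℝ, a < a' →
      0 < (u y' a + v y' a) - (u y a + v y a) →
      0 < (u y' a' + v y' a') - (u y a' + v y a'))
    (hD : DFeas n X u θ x t)
    (hopt : ∀ x' t' : ℕ → ℝ, DFeas n X u θ x' t' → Obj n μ v θ x' t' ≤ Obj n μ v θ x t) :
    ∀ i j, i < n → j < n → u (x i) (θ i) - t i ≥ u (x j) (θ i) - t j := by
  classical
  obtain ⟨hmem, hDIC, hIR⟩ := hD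
  have hD' : DFeas n X u θ x t := ⟨hmem, hDIC, hIR⟩
  have hθle : ∀ i j, i ≤ j → j < n → θ i ≤ θ j := by
    intro i j hij hj
    rcases lt_or_eq_of_le hij with h | h
    · exact (hθ i j h hj).le
    · rw [h]
  have hDm : ∀ p q, p ∈ X → q ∈ X → p ≤ q → ∀ a b : ℝ, a ≤ b →
      u p b - u p a ≤ u q b - u q a := by
    intro p q hp hq hpq a b hab
    rcases lt_or_eq_of_le hpq with h | h
    · rcases lt_or_eq_of_le hab with h' | h'
      · have := hSID p hp q hq h a b h'
        linarith
      · rw [← h']; simp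
    · rw [h]
  -- CORE : monotonicity of the allocation at an optimum
  have hmono : ∀ i j, i < j → j < n → x i ≤ x j := by
    by_contra hcon
    push_neg at hcon
    obtain ⟨i1, j1, hij1, hj1n, hlt1⟩ := hcon
    have hex : ∃ j, j < n ∧ ∃ k, k < j ∧ x j < x k := ⟨j1, hj1n, i1, hij1, hlt1⟩
    have hjn : Nat.find hex < n := (Nat.find_spec hex).1
    obtain ⟨k0, hk0j, hk0⟩ := (Nat.find_spec hex).2
    set j := Nat.find hex with hjdef
    have hmin : ∀ l, l < j → ¬(l < n ∧ ∃ k, k < l ∧ x l < x k) := by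
      intro l hl
      exact Nat.find_min hex (by rw [← hjdef]; exact hl)
    have hj0 : 0 < j := lt_of_le_of_lt (Nat.zero_le k0) hk0j
    set i := j - 1 with hidef
    have hij : i < j := Nat.sub_lt hj0 one_pos
    have hin : i < n := hij.trans hjn
    have hpre : ∀ k, k < j → x k ≤ x i := by
      intro k hk
      have hk' : k ≤ i := by omega
      rcases lt_or_eq_of_le hk' with h | h
      · by_contra hgt
        push_neg at hgt
        exact hmin i hij ⟨hin, k, h, hgt⟩
      · rw [h]
    have hba : x j < x i := lt_of_lt_of_le hk0 (hpre k0 hk0j)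
    have hxiX : x i ∈ X := hmem i hin
    have hxjX : x j ∈ X := hmem j hjn
    have hθij : θ i < θ j := hθ i j hij hjn
    -- the rent of type j is pinned down by type i's bundle
    have hKEY : u (x j) (θ j) - t j
        ≤ (u (x i) (θ i) - t i) + (u (x i) (θ j) - u (x i) (θ i)) := by
      rcases le_or_gt (u (x j) (θ j) - t j) 0 with h | h
      · have h1 := hIR i hin
        have h2 : u (x i) (θ i) ≤ u (x i) (θ j) := humono (x i) hxiX hθij.le
        linarith
      · obtain ⟨k, hkj, hk⟩ := env_bind hμpos hD' hopt hjn h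
        have hk' : k ≤ i := by omega
        rcases lt_or_eq_of_le hk' with hki | hki
        · have h1 := hDIC i k hki hin
          have h2 : u (x k) (θ j) - u (x k) (θ i) ≤ u (x i) (θ j) - u (x i) (θ i) :=
            hDm (x k) (x i) (hmem k (by omega)) hxiX (hpre k hkj) (θ i) (θ j) hθij.le
          linarith
        · subst hki
          linarith
    rcases le_or_gt (u (x i) (θ i) + v (x i) (θ i)) (u (x j) (θ i) + v (x j) (θ i))
      with hdown | hup
    · -- DOWN case : pool all types at the top allocation downwards and raise t j
      have hsk : ∀ k, k < j → x k = x i →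
          u (x i) (θ k) + v (x i) (θ k) ≤ u (x j) (θ k) + v (x j) (θ k) := by
        intro k hkj hxk
        rcases lt_or_eq_of_le (show k ≤ i by omega) with hki | hki
        · by_contra hgt
          push_neg at hgt
          have := hWSCD (x j) hxjX (x i) hxiX hba (θ k) (θ i) (hθ k i hki hin)
            (by linarith)
          linarith
        · subst hki; exact hdown
      set x' : ℕ → ℝ := fun k => if k < j ∧ x k = x i then x j else x k with hx'
      set t'' : ℕ → ℝ := fun k =>
        if k < j ∧ x k = x i then t k + (u (x j) (θ k) - u (x k) (θ k)) else t k with ht''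
      have hjmv : ¬(j < j ∧ x j = x i) := fun hc => lt_irrefl j hc.1
      have hx'mv : ∀ k, k < j → x k = x i → x' k = x j := by
        intro k h1 h2; rw [hx']; exact if_pos ⟨h1, h2⟩
      have hx'n : ∀ k, ¬(k < j ∧ x k = x i) → x' k = x k := by
        intro k h; rw [hx']; exact if_neg h
      have ht''mv : ∀ k, k < j → x k = x i →
          t'' k = t k + (u (x j) (θ k) - u (x k) (θ k)) := by
        intro k h1 h2; rw [ht'']; exact if_pos ⟨h1, h2⟩
      have ht''n : ∀ k, ¬(k < j ∧ x k = x i) → t'' k = t k := by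
        intro k h; rw [ht'']; exact if_neg h
      have hUj0 : 0 < u (x j) (θ j) - t j := by
        have h1 := hDIC j i hij hjn
        have h2 := hSID (x j) hxjX (x i) hxiX hba (θ i) (θ j) hθij
        have h3 : u (x j) (θ i) ≤ u (x j) (θ j) := humono (x j) hxjX hθij.le
        have h4 := hIR i hin
        linarith
      -- positive slack of all of j's downward constraints after the move
      have hfk : ∀ k, k < j →
          u (x' k) (θ j) - t'' k < u (x j) (θ j) - t j := by
        intro k hkj
        have hkn : k < n := hkj.trans hjn
        have hxkX := hmem k hkn
        have hθkj : θ k < θ j := hθ k j hkj hjn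
        by_cases hxk : x k = x i
        · rw [hx'mv k hkj hxk, ht''mv k hkj hxk]
          have h1 := hDIC j k hkj hjn
          have h2 := hSID (x j) hxjX (x k) (by rw [hxk]; exact hxiX)
            (by rw [hxk]; exact hba) (θ k) (θ j) hθkj
          linarith
        · have hmv : ¬(k < j ∧ x k = x i) := fun hc => hxk hc.2
          rw [hx'n k hmv, ht''n k hmv]
          have hki : k < i := by
            rcases lt_or_eq_of_le (show k ≤ i by omega) with h' | h'
            · exact h'
            · exact absurd (by rw [h']) hxk
          have h1 := hDIC i k hki hin
          have hxki : x k < x i := lt_of_le_of_ne (hpre k hkj) hxk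
          have h2 := hSID (x k) hxkX (x i) hxiX hxki (θ i) (θ j) hθij
          have h3 := hDIC j i hij hjn
          linarith
      set ε := (range j).fold min (u (x j) (θ j) - t j)
        (fun k => (u (x j) (θ j) - t j) - (u (x' k) (θ j) - t'' k)) with hεdef
      have hε0 : 0 < ε := by
        rw [hεdef]
        refine (Finset.lt_fold_min 0).mpr ⟨hUj0, fun k hk => ?_⟩
        have := hfk k (mem_range.mp hk)
        linarith
      have hεU : ε ≤ u (x j) (θ j) - t j := by
        rw [hεdef]; exact (Finset.fold_min_le _).mpr (Or.inl le_rfl)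
      have hεf : ∀ k, k < j →
          ε ≤ (u (x j) (θ j) - t j) - (u (x' k) (θ j) - t'' k) := by
        intro k hk
        rw [hεdef]
        exact (Finset.fold_min_le _).mpr (Or.inr ⟨k, mem_range.mpr hk, le_rfl⟩)
      set t' : ℕ → ℝ := fun k => if k = j then t j + ε else t'' k with ht'
      have ht'j : t' j = t j + ε := by rw [ht']; exact if_pos rfl
      have ht'nj : ∀ k, k ≠ j → t' k = t'' k := by
        intro k h; rw [ht']; exact if_neg h
      have hx'j : x' j = x j := hx'n j hjmv
      have hLHS : ∀ m, m ≠ j → u (x' m) (θ m) - t' m = u (x m) (θ m) - t m := by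
        intro m hm
        rw [ht'nj m hm]
        by_cases hmv : m < j ∧ x m = x i
        · rw [hx'mv m hmv.1 hmv.2, ht''mv m hmv.1 hmv.2]; ring
        · rw [hx'n m hmv, ht''n m hmv]
      have hRHSle : ∀ m k, k < m → m < n → k ≠ j →
          u (x' k) (θ m) - t' k ≤ u (x k) (θ m) - t k := by
        intro m k hkm hmn hkj'
        rw [ht'nj k hkj']
        by_cases hmv : k < j ∧ x k = x i
        · rw [hx'mv k hmv.1 hmv.2, ht''mv k hmv.1 hmv.2]
          have hxkX := hmem k (by omega)
          have h1 : u (x j) (θ m) - u (x j) (θ k) ≤ u (x k) (θ m) - u (x k) (θ k) :=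
            hDm (x j) (x k) hxjX hxkX (by rw [hmv.2]; exact hba.le) (θ k) (θ m)
              (hθle k m hkm.le hmn)
          linarith
        · rw [hx'n k hmv, ht''n k hmv]
      have hLj : u (x' j) (θ j) - t' j = (u (x j) (θ j) - t j) - ε := by
        rw [hx'j, ht'j]; ring
      have hfeas : DFeas n X u θ x' t' := by
        refine ⟨?_, ?_, ?_⟩
        · intro a han
          by_cases hmv : a < j ∧ x a = x i
          · rw [hx'mv a hmv.1 hmv.2]; exact hxjX
          · rw [hx'n a hmv]; exact hmem a han
        · intro m k hkm hmn
          by_cases hmj : m = j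
          · subst hmj
            have hkj' : k ≠ j := by omega
            have h1 := hεf k hkm
            rw [hLj, ht'nj k hkj']
            linarith
          · have hL := hLHS m hmj
            by_cases hkj' : k = j
            · subst hkj'
              have hR : u (x' j) (θ m) - t' j = (u (x j) (θ m) - t j) - ε := by
                rw [hx'j, ht'j]; ring
              have h1 := hDIC m j hkm hmn
              rw [hL, hR]
              linarith
            · have hR := hRHSle m k hkm hmn hkj'
              have h1 := hDIC m k hkm hmn
              rw [hL]
              linarith
        · intro m hmn
          by_cases hmj : m = j
          · subst hmj
            rw [hLj]
            linarith
          · rw [hLHS m hmj]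
            exact hIR m hmn
      have hgt : Obj n μ v θ x t < Obj n μ v θ x' t' := by
        have h1 : Obj n μ v θ x' t' - Obj n μ v θ x t
            = ∑ iq ∈ range n,
                μ iq * ((v (x' iq) (θ iq) + t' iq) - (v (x iq) (θ iq) + t iq)) := by
          unfold Obj
          rw [← Finset.sum_sub_distrib]
          exact Finset.sum_congr rfl (by intro iq _; ring)
        have h2 : 0 < ∑ iq ∈ range n,
            μ iq * ((v (x' iq) (θ iq) + t' iq) - (v (x iq) (θ iq) + t iq)) := by
          refine Finset.sum_pos' ?_ ⟨j, mem_range.mpr hjn, ?_⟩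
          · intro iq _
            by_cases hiqj : iq = j
            · subst hiqj
              rw [hx'j, ht'j]
              have heq : (v (x j) (θ j) + (t j + ε)) - (v (x j) (θ j) + t j) = ε := by
                ring
              rw [heq]
              exact (mul_pos (hμpos j hjn) hε0).le
            · by_cases hmv : iq < j ∧ x iq = x i
              · rw [hx'mv iq hmv.1 hmv.2, ht'nj iq hiqj, ht''mv iq hmv.1 hmv.2]
                have hiqn : iq < n := lt_trans hmv.1 hjn
                have hs := hsk iq hmv.1 hmv.2
                rw [hmv.2]
                apply mul_nonneg (hμpos iq hiqn).le
                linarith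
              · rw [hx'n iq hmv, ht'nj iq hiqj, ht''n iq hmv]
                have heq : (v (x iq) (θ iq) + t iq) - (v (x iq) (θ iq) + t iq) = 0 := by
                  ring
                rw [heq, mul_zero]
          · rw [hx'j, ht'j]
            have heq : (v (x j) (θ j) + (t j + ε)) - (v (x j) (θ j) + t j) = ε := by
              ring
            rw [heq]
            exact mul_pos (hμpos j hjn) hε0
        linarith
      exact absurd (hopt x' t' hfeas) (not_le.mpr hgt)
    · -- UP case : raise type j's allocation to x i, keeping its utility
      have hδ : 0 < (u (x i) (θ j) + v (x i) (θ j)) - (u (x j) (θ j) + v (x j) (θ j)) :=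
        hWSCD (x j) hxjX (x i) hxiX hba (θ i) (θ j) hθij (by linarith)
      set x' := Function.update x j (x i) with hx'
      set t' := Function.update t j (t j + (u (x i) (θ j) - u (x j) (θ j))) with ht'
      have hx'j : x' j = x i := by rw [hx']; exact Function.update_self j _ x
      have hx'k : ∀ k, k ≠ j → x' k = x k := by
        intro k hk; rw [hx']; exact Function.update_of_ne hk _ x
      have ht'j : t' j = t j + (u (x i) (θ j) - u (x j) (θ j)) := by
        rw [ht']; exact Function.update_self j _ t
      have ht'k : ∀ k, k ≠ j → t' k = t k := by
        intro k hk; rw [ht']; exact Function.update_of_ne hk _ t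
      have hfeas : DFeas n X u θ x' t' := by
        refine ⟨?_, ?_, ?_⟩
        · intro a han
          by_cases haj : a = j
          · subst haj; rw [hx'j]; exact hxiX
          · rw [hx'k a haj]; exact hmem a han
        · intro a b hba' han
          by_cases haj : a = j
          · subst haj
            have hbj : b ≠ j := Nat.ne_of_lt hba'
            rw [hx'j, ht'j, hx'k b hbj, ht'k b hbj]
            have := hDIC j b hba' hjn
            linarith
          · by_cases hbj : b = j
            · subst hbj
              rw [hx'k a haj, ht'k a haj, hx'j, ht'j]
              have h1 := hDIC a i (by omega) han
              linarith
            · rw [hx'k a haj, ht'k a haj, hx'k b hbj, ht'k b hbj]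
              exact hDIC a b hba' han
        · intro a han
          by_cases haj : a = j
          · subst haj
            rw [hx'j, ht'j]
            have := hIR j hjn
            linarith
          · rw [hx'k a haj, ht'k a haj]
            exact hIR a han
      have hgt : Obj n μ v θ x t < Obj n μ v θ x' t' := by
        have h1 : Obj n μ v θ x' t' - Obj n μ v θ x t
            = ∑ iq ∈ range n,
                μ iq * ((v (x' iq) (θ iq) + t' iq) - (v (x iq) (θ iq) + t iq)) := by
          unfold Obj
          rw [← Finset.sum_sub_distrib]
          exact Finset.sum_congr rfl (by intro iq _; ring)
        have h2 : ∀ iq ∈ range n,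
            μ iq * ((v (x' iq) (θ iq) + t' iq) - (v (x iq) (θ iq) + t iq))
              = if iq = j then
                  μ j * ((u (x i) (θ j) + v (x i) (θ j)) - (u (x j) (θ j) + v (x j) (θ j)))
                else 0 := by
          intro iq _
          by_cases hiqj : iq = j
          · rw [if_pos hiqj]
            subst hiqj
            rw [hx'j, ht'j]
            ring
          · rw [if_neg hiqj, hx'k iq hiqj, ht'k iq hiqj]
            ring
        rw [Finset.sum_congr rfl h2, Finset.sum_ite_eq' (range n) j,
          if_pos (mem_range.mpr hjn)] at h1
        have := mul_pos (hμpos j hjn) hδ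
        linarith
      exact absurd (hopt x' t' hfeas) (not_le.mpr hgt)
  -- upward IC by strong induction using the envelope condition
  have hupIC : ∀ j, j < n → ∀ i, i < j → u (x j) (θ i) - t j ≤ u (x i) (θ i) - t i := by
    intro j
    induction j using Nat.strong_induction_on with
    | _ j IH =>
      intro hjn i hij
      have hin : i < n := hij.trans hjn
      have hxjX := hmem j hjn
      have hθij := hθ i j hij hjn
      have hDj : 0 ≤ u (x j) (θ j) - u (x j) (θ i) := by
        have := humono (x j) hxjX hθij.le
        linarith
      rcases le_or_gt (u (x j) (θ j) - t j) 0 with h | h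
      · have := hIR i hin
        linarith
      · obtain ⟨k, hkj, hk⟩ := env_bind hμpos hD' hopt hjn h
        have hkn : k < n := hkj.trans hjn
        have hxkX := hmem k hkn
        have hDkj : u (x k) (θ j) - u (x k) (θ i) ≤ u (x j) (θ j) - u (x j) (θ i) :=
          hDm (x k) (x j) hxkX hxjX (hmono k j hkj hjn) (θ i) (θ j) hθij.le
        rcases lt_trichotomy k i with hki | hki | hki
        · have h1 := hDIC i k hki hin
          linarith
        · subst hki
          linarith
        · have h2 := IH k hkj hkn i hki
          linarith
  intro i j hin hjn
  rcases lt_trichotomy j i with h | h | h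
  · exact hDIC i j h hin
  · rw [h]
  · exact hupIC j hjn i h

/-- **Downward sufficiency in the finite problem.** If the surplus `u + v` has weak
single-crossing differences, the downward-IC program has the same optimal value as
the full-IC program, and every optimal solution of the downward-IC program
satisfies all IC constraints. -/
theorem stmt4
    (n : ℕ) (X : Set ℝ) (hX : IsCompact X)
    (θ μ : ℕ → ℝ)
    (hθ : ∀ i j, i < j → j < n → θ i < θ j)
    (hμpos : ∀ i, i < n → 0 < μ i) (hμsum : ∑ i ∈ range n, μ i = 1)
    (u v : ℝ → ℝ → ℝ)
    (huc : ContinuousOn (fun p : ℝ × ℝ => u p.1 p.2) (X ×ˢ Set.univ))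
    (hvc : ContinuousOn (fun p : ℝ × ℝ => v p.1 p.2) (X ×ˢ Set.univ))
    (humono : ∀ x ∈ X, Monotone (u x))
    (hSID : ∀ x ∈ X, ∀ x' ∈ X, x < x' → ∀ a a' : ℝ, a < a' →
      u x' a - u x a < u x' a' - u x a')
    (hWSCD : ∀ x ∈ X, ∀ x' ∈ X, x < x' → ∀ a a' : ℝ, a < a' →
      0 < (u x' a + v x' a) - (u x a + v x a) →
      0 < (u x' a' + v x' a') - (u x a' + v x a')) :
    sSup {p : ℝ | ∃ x t : ℕ → ℝ, DFeas n X u θ x t ∧ p = Obj n μ v θ x t} =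
      sSup {p : ℝ | ∃ x t : ℕ → ℝ, FullFeas n X u θ x t ∧ p = Obj n μ v θ x t} ∧
    ∀ x t : ℕ → ℝ, DFeas n X u θ x t →
      (∀ x' t' : ℕ → ℝ, DFeas n X u θ x' t' → Obj n μ v θ x' t' ≤ Obj n μ v θ x t) →
      ∀ i j, i < n → j < n → u (x i) (θ i) - t i ≥ u (x j) (θ i) - t j := by
  classical
  have part2 : ∀ x t : ℕ → ℝ, DFeas n X u θ x t →
      (∀ x' t' : ℕ → ℝ, DFeas n X u θ x' t' → Obj n μ v θ x' t' ≤ Obj n μ v θ x t) →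
      ∀ i j, i < n → j < n → u (x i) (θ i) - t i ≥ u (x j) (θ i) - t j :=
    fun x t hD hopt => full_ic hθ hμpos humono hSID hWSCD hD hopt
  refine ⟨?_, part2⟩
  rcases Nat.eq_zero_or_pos n with hn | hn0
  · subst hn
    have hsets : {p : ℝ | ∃ x t : ℕ → ℝ, DFeas 0 X u θ x t ∧ p = Obj 0 μ v θ x t}
        = {p : ℝ | ∃ x t : ℕ → ℝ, FullFeas 0 X u θ x t ∧ p = Obj 0 μ v θ x t} := by
      ext p
      constructor
      · rintro ⟨x, t, _, hp⟩
        exact ⟨x, t, ⟨fun i hi => absurd hi (Nat.not_lt_zero i),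
          fun i j hi => absurd hi (Nat.not_lt_zero i),
          fun i hi => absurd hi (Nat.not_lt_zero i)⟩, hp⟩
      · rintro ⟨x, t, _, hp⟩
        exact ⟨x, t, ⟨fun i hi => absurd hi (Nat.not_lt_zero i),
          fun i j _ hi => absurd hi (Nat.not_lt_zero i),
          fun i hi => absurd hi (Nat.not_lt_zero i)⟩, hp⟩
    rw [hsets]
  · rcases Set.eq_empty_or_nonempty X with hXe | ⟨c₀, hc₀⟩
    · have h1 : {p : ℝ | ∃ x t : ℕ → ℝ, DFeas n X u θ x t ∧ p = Obj n μ v θ x t} = ∅ := by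
        ext p
        simp only [Set.mem_setOf_eq, Set.mem_empty_iff_false, iff_false, not_exists]
        rintro x t ⟨hD, _⟩
        have := hD.1 0 hn0
        rw [hXe] at this
        exact this
      have h2 : {p : ℝ | ∃ x t : ℕ → ℝ, FullFeas n X u θ x t ∧ p = Obj n μ v θ x t} = ∅ := by
        ext p
        simp only [Set.mem_setOf_eq, Set.mem_empty_iff_false, iff_false, not_exists]
        rintro x t ⟨hF, _⟩
        have := hF.1 0 hn0
        rw [hXe] at this
        exact this
      rw [h1, h2]
    · -- main case : X compact nonempty, n > 0
      have hRex : ∀ i : ℕ, ∃ r : ℝ, ∀ y ∈ X, |u y (θ i)| ≤ r := by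
        intro i
        have hg : Continuous (fun y : ℝ => ((y, θ i) : ℝ × ℝ)) :=
          continuous_id.prodMk continuous_const
        have h1 : ContinuousOn (fun y : ℝ => u y (θ i)) X := by
          have h2 := huc.comp hg.continuousOn
            (fun y (hy : y ∈ X) => Set.mem_prod.mpr ⟨hy, trivial⟩)
          exact h2
        obtain ⟨y0, _, hy0⟩ := hX.exists_isMaxOn ⟨c₀, hc₀⟩ h1.abs
        exact ⟨|u y0 (θ i)|, fun y hy => hy0 hy⟩
      choose r hr using hRex
      set R := (range n).fold max 0 r with hRdef
      have hR0 : (0:ℝ) ≤ R := by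
        rw [hRdef]; exact (Finset.le_fold_max _).mpr (Or.inl le_rfl)
      have hRb : ∀ i, i < n → ∀ y ∈ X, |u y (θ i)| ≤ R := by
        intro i hi y hy
        refine le_trans (hr i y hy) ?_
        rw [hRdef]
        exact (Finset.le_fold_max _).mpr (Or.inr ⟨i, mem_range.mpr hi, le_rfl⟩)
      set Kt : ℝ := R + 2 * R * n with hKtdef
      have h2Rn : (0:ℝ) ≤ 2 * R * n :=
        mul_nonneg (mul_nonneg (by norm_num) hR0) (Nat.cast_nonneg n)
      set P : Set ((ℕ → ℝ) × (ℕ → ℝ)) :=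
        (Set.univ.pi fun i => if i < n then X else {c₀}) ×ˢ
          (Set.univ.pi fun i => if i < n then Set.Icc (-Kt) Kt else {(0:ℝ)}) with hPdef
      have hPc : IsCompact P := by
        refine IsCompact.prod (isCompact_univ_pi fun i => ?_)
          (isCompact_univ_pi fun i => ?_)
        · by_cases h : i < n
          · simpa only [if_pos h] using hX
          · simpa only [if_neg h] using isCompact_singleton
        · by_cases h : i < n
          · simpa only [if_pos h] using isCompact_Icc
          · simpa only [if_neg h] using isCompact_singleton
      have hPcl : IsClosed P := by
        refine IsClosed.prod (isClosed_set_pi fun i _ => ?_)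
          (isClosed_set_pi fun i _ => ?_)
        · by_cases h : i < n
          · simpa only [if_pos h] using hX.isClosed
          · simpa only [if_neg h] using isClosed_singleton
        · by_cases h : i < n
          · simpa only [if_pos h] using isClosed_Icc
          · simpa only [if_neg h] using isClosed_singleton
      have hx1mem : ∀ (p : (ℕ → ℝ) × (ℕ → ℝ)), p ∈ P → ∀ i, i < n → p.1 i ∈ X := by
        intro p hp i hi
        have h1 : p.1 i ∈ (if i < n then X else ({c₀} : Set ℝ)) :=
          (Set.mem_prod.mp hp).1 i (Set.mem_univ i)
        rwa [if_pos hi] at h1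
      have hUA : ∀ k, k < n → ∀ c : ℝ,
          ContinuousOn (fun p : (ℕ → ℝ) × (ℕ → ℝ) => u (p.1 k) c) P := by
        intro k hk c
        have hg : Continuous (fun p : (ℕ → ℝ) × (ℕ → ℝ) => ((p.1 k, c) : ℝ × ℝ)) :=
          ((continuous_apply k).comp continuous_fst).prodMk continuous_const
        have h1 := huc.comp hg.continuousOn
          (fun p (hp : p ∈ P) => Set.mem_prod.mpr ⟨hx1mem p hp k hk, trivial⟩)
        exact h1
      have hVA : ∀ k, k < n → ∀ c : ℝ,
          ContinuousOn (fun p : (ℕ → ℝ) × (ℕ → ℝ) => v (p.1 k) c) P := by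
        intro k hk c
        have hg : Continuous (fun p : (ℕ → ℝ) × (ℕ → ℝ) => ((p.1 k, c) : ℝ × ℝ)) :=
          ((continuous_apply k).comp continuous_fst).prodMk continuous_const
        have h1 := hvc.comp hg.continuousOn
          (fun p (hp : p ∈ P) => Set.mem_prod.mpr ⟨hx1mem p hp k hk, trivial⟩)
        exact h1
      have hT : ∀ k : ℕ, Continuous (fun p : (ℕ → ℝ) × (ℕ → ℝ) => p.2 k) :=
        fun k => (continuous_apply k).comp continuous_snd
      set g : ((ℕ → ℝ) × (ℕ → ℝ)) → ℝ := fun p =>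
        (range n).fold min 1 (fun i =>
          min (u (p.1 i) (θ i) - p.2 i)
            ((range i).fold min 1 (fun k =>
              (u (p.1 i) (θ i) - p.2 i) - (u (p.1 k) (θ i) - p.2 k)))) with hgdef
      have hgiff : ∀ p : ((ℕ → ℝ) × (ℕ → ℝ)),
          (0 ≤ g p ↔
            ((∀ i k, k < i → i < n →
                u (p.1 i) (θ i) - p.2 i ≥ u (p.1 k) (θ i) - p.2 k) ∧
              (∀ i, i < n → u (p.1 i) (θ i) - p.2 i ≥ 0))) := by
        intro p
        rw [hgdef]
        simp only [Finset.le_fold_min, le_min_iff, mem_range]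
        constructor
        · rintro ⟨-, h⟩
          refine ⟨fun i k hk hi => ?_, fun i hi => (h i hi).1⟩
          have := ((h i hi).2).2 k hk
          linarith
        · rintro ⟨hic, hir⟩
          refine ⟨by norm_num, fun i hi => ⟨hir i hi, by norm_num, fun k hk => ?_⟩⟩
          have := hic i k hk hi
          linarith
      have hgc : ContinuousOn g P := by
        rw [hgdef]
        apply contOn_fold_min
        intro i hi
        have hi' := mem_range.mp hi
        intro p hp
        refine (((hUA i hi' (θ i)).sub (hT i).continuousOn) p hp).min ?_
        refine (contOn_fold_min (range i) 1 _ P ?_) p hp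
        intro k hk
        have hkn : k < n := lt_trans (mem_range.mp hk) hi'
        exact ((hUA i hi' (θ i)).sub (hT i).continuousOn).sub
          ((hUA k hkn (θ i)).sub (hT k).continuousOn)
      set S : Set ((ℕ → ℝ) × (ℕ → ℝ)) := P ∩ g ⁻¹' (Set.Ici 0) with hSdef
      have hScl : IsClosed S :=
        ContinuousOn.preimage_isClosed_of_isClosed hgc hPcl isClosed_Ici
      have hSc : IsCompact S := hPc.of_isClosed_subset hScl Set.inter_subset_left
      have hSD : ∀ p : ((ℕ → ℝ) × (ℕ → ℝ)), p ∈ S → DFeas n X u θ p.1 p.2 := by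
        rintro p ⟨hpP, hpg⟩
        have h := (hgiff p).mp hpg
        exact ⟨fun i hi => hx1mem p hpP i hi, h.1, h.2⟩
      have hθ0le : ∀ i, i < n → θ 0 ≤ θ i := by
        intro i hi
        rcases Nat.eq_zero_or_pos i with h | h
        · rw [h]
        · exact (hθ 0 i h hi).le
      have hmcD : DFeas n X u θ (fun _ => c₀) (fun i => if i < n then u c₀ (θ 0) else 0) := by
        refine ⟨fun i _ => hc₀, ?_, ?_⟩
        · intro i k hk hi
          show u c₀ (θ i) - (if i < n then u c₀ (θ 0) else 0)
            ≥ u c₀ (θ i) - (if k < n then u c₀ (θ 0) else 0)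
          rw [if_pos hi, if_pos (hk.trans hi)]
        · intro i hi
          show u c₀ (θ i) - (if i < n then u c₀ (θ 0) else 0) ≥ 0
          rw [if_pos hi]
          have := humono c₀ hc₀ (hθ0le i hi)
          linarith
      have hmcS : ((fun _ => c₀, fun i => if i < n then u c₀ (θ 0) else 0)
          : (ℕ → ℝ) × (ℕ → ℝ)) ∈ S := by
        refine ⟨Set.mem_prod.mpr ⟨?_, ?_⟩, ?_⟩
        · intro i _
          show c₀ ∈ (if i < n then X else ({c₀} : Set ℝ))
          by_cases h : i < n
          · rw [if_pos h]; exact hc₀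
          · rw [if_neg h]; exact rfl
        · intro i _
          show (if i < n then u c₀ (θ 0) else 0) ∈
            (if i < n then Set.Icc (-Kt) Kt else ({(0:ℝ)} : Set ℝ))
          by_cases h : i < n
          · rw [if_pos h, if_pos h]
            have h1 := abs_le.mp (hRb 0 hn0 c₀ hc₀)
            rw [hKtdef]
            constructor
            · linarith [h1.1]
            · linarith [h1.2]
          · rw [if_neg h, if_neg h]
            exact rfl
        · exact Set.mem_preimage.mpr ((hgiff _).mpr ⟨hmcD.2.1, hmcD.2.2⟩)
      have hSne : S.Nonempty := ⟨_, hmcS⟩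
      have hObjc : ContinuousOn (fun p : ((ℕ → ℝ) × (ℕ → ℝ)) => Obj n μ v θ p.1 p.2) P := by
        unfold Obj
        apply contOn_finset_sum
        intro i hi
        have hi' := mem_range.mp hi
        exact continuousOn_const.mul
          ((hVA i hi' (θ i)).add (hT i).continuousOn)
      obtain ⟨pstar, hpS, hpmax⟩ :=
        hSc.exists_isMaxOn hSne (hObjc.mono Set.inter_subset_left)
      have hpD : DFeas n X u θ pstar.1 pstar.2 := hSD pstar hpS
      have hdom : ∀ x t : ℕ → ℝ, DFeas n X u θ x t →
          Obj n μ v θ x t ≤ Obj n μ v θ pstar.1 pstar.2 := by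
        intro x t hD
        obtain ⟨hmem, hIC, hIR⟩ := hD
        set Uc : ℕ → ℝ := fun i => min (u (x i) (θ i) - t i) (2 * R * i) with hUcdef
        set xh : ℕ → ℝ := fun i => if i < n then x i else c₀ with hxhdef
        set th : ℕ → ℝ := fun i => if i < n then u (x i) (θ i) - Uc i else 0 with hthdef
        have hxh1 : ∀ i, i < n → xh i = x i := by
          intro i hi; rw [hxhdef]; exact if_pos hi
        have hth1 : ∀ i, i < n → th i = u (x i) (θ i) - Uc i := by
          intro i hi; rw [hthdef]; exact if_pos hi
        have hxh2 : ∀ i, ¬ i < n → xh i = c₀ := by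
          intro i hi; rw [hxhdef]; exact if_neg hi
        have hth2 : ∀ i, ¬ i < n → th i = 0 := by
          intro i hi; rw [hthdef]; exact if_neg hi
        have hUc0 : ∀ i, i < n → 0 ≤ Uc i := by
          intro i hi
          refine le_min (hIR i hi) ?_
          exact mul_nonneg (mul_nonneg (by norm_num) hR0) (Nat.cast_nonneg i)
        have hUcle : ∀ i, Uc i ≤ u (x i) (θ i) - t i := fun i => min_le_left _ _
        have hUcle2 : ∀ i, Uc i ≤ 2 * R * i := fun i => min_le_right _ _
        have hDh : DFeas n X u θ xh th := by
          refine ⟨?_, ?_, ?_⟩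
          · intro i hi
            rw [hxh1 i hi]
            exact hmem i hi
          · intro i k hk hi
            have hkn : k < n := hk.trans hi
            rw [hxh1 i hi, hth1 i hi, hxh1 k hkn, hth1 k hkn]
            have hgoal : Uc k + (u (x k) (θ i) - u (x k) (θ k)) ≤ Uc i := by
              rcases min_cases (u (x i) (θ i) - t i) (2 * R * (i:ℝ)) with
                ⟨heq, _⟩ | ⟨heq, _⟩
              · have h1 := hIC i k hk hi
                have h2 := hUcle k
                have h3 : Uc i = u (x i) (θ i) - t i := heq
                rw [h3]
                linarith
              · have h2 := hUcle2 k
                have h3 : u (x k) (θ i) - u (x k) (θ k) ≤ 2 * R := by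
                  have ha := abs_le.mp (hRb i hi (x k) (hmem k hkn))
                  have hb := abs_le.mp (hRb k hkn (x k) (hmem k hkn))
                  linarith [ha.1, ha.2, hb.1, hb.2]
                have h4 : (k:ℝ) + 1 ≤ (i:ℝ) := by
                  exact_mod_cast Nat.succ_le_of_lt hk
                have h5 : 2 * R * ((k:ℝ) + 1) ≤ 2 * R * (i:ℝ) :=
                  mul_le_mul_of_nonneg_left h4 (by linarith)
                have h6 : Uc i = 2 * R * (i:ℝ) := heq
                rw [h6]
                linarith
            linarith
          · intro i hi
            rw [hxh1 i hi, hth1 i hi]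
            have := hUc0 i hi
            linarith
        have hobjle : Obj n μ v θ x t ≤ Obj n μ v θ xh th := by
          unfold Obj
          apply Finset.sum_le_sum
          intro i hi
          have hi' := mem_range.mp hi
          rw [hxh1 i hi', hth1 i hi']
          have h1 := hUcle i
          exact mul_le_mul_of_nonneg_left (by linarith) (hμpos i hi').le
        have hmemS : (xh, th) ∈ S := by
          refine ⟨Set.mem_prod.mpr ⟨?_, ?_⟩, ?_⟩
          · intro i _
            show xh i ∈ (if i < n then X else ({c₀} : Set ℝ))
            by_cases h : i < n
            · rw [if_pos h, hxh1 i h]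
              exact hmem i h
            · rw [if_neg h, hxh2 i h]
              exact rfl
          · intro i _
            show th i ∈ (if i < n then Set.Icc (-Kt) Kt else ({(0:ℝ)} : Set ℝ))
            by_cases h : i < n
            · rw [if_pos h, hth1 i h]
              have ha := abs_le.mp (hRb i h (x i) (hmem i h))
              have h0 := hUc0 i h
              have h2 := hUcle2 i
              have h3 : (i:ℝ) ≤ (n:ℝ) := by exact_mod_cast (Nat.le_of_lt h)
              have h4 : 2 * R * (i:ℝ) ≤ 2 * R * (n:ℝ) :=
                mul_le_mul_of_nonneg_left h3 (by linarith)
              rw [hKtdef]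
              constructor
              · simp only [neg_add]
                linarith [ha.1]
              · linarith [ha.2]
            · rw [if_neg h, hth2 i h]
              exact rfl
          · exact Set.mem_preimage.mpr ((hgiff (xh, th)).mpr ⟨hDh.2.1, hDh.2.2⟩)
        exact le_trans hobjle (hpmax hmemS)
      have hpfull : FullFeas n X u θ pstar.1 pstar.2 :=
        ⟨hpD.1, fun i j hi hj =>
          full_ic hθ hμpos humono hSID hWSCD hpD (fun x' t' h => hdom x' t' h) i j hi hj,
          hpD.2.2⟩
      have hsub : {p : ℝ | ∃ x t : ℕ → ℝ, FullFeas n X u θ x t ∧ p = Obj n μ v θ x t}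
          ⊆ {p : ℝ | ∃ x t : ℕ → ℝ, DFeas n X u θ x t ∧ p = Obj n μ v θ x t} := by
        rintro p ⟨x, t, hF, hp⟩
        exact ⟨x, t, ⟨hF.1, fun i k hk hi => hF.2.1 i k hi (hk.trans hi), hF.2.2⟩, hp⟩
      have hqmem : Obj n μ v θ pstar.1 pstar.2
          ∈ {p : ℝ | ∃ x t : ℕ → ℝ, FullFeas n X u θ x t ∧ p = Obj n μ v θ x t} :=
        ⟨pstar.1, pstar.2, hpfull, rfl⟩
      have hub : ∀ p ∈ {p : ℝ | ∃ x t : ℕ → ℝ, DFeas n X u θ x t ∧ p = Obj n μ v θ x t},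
          p ≤ Obj n μ v θ pstar.1 pstar.2 := by
        rintro p ⟨x, t, hD, hp⟩
        rw [hp]
        exact hdom x t hD
      have hbddD : BddAbove {p : ℝ | ∃ x t : ℕ → ℝ, DFeas n X u θ x t ∧ p = Obj n μ v θ x t} :=
        ⟨Obj n μ v θ pstar.1 pstar.2, fun p hp => hub p hp⟩
      have hbddF : BddAbove {p : ℝ | ∃ x t : ℕ → ℝ, FullFeas n X u θ x t ∧ p = Obj n μ v θ x t} :=
        hbddD.mono hsub
      have hDne : Set.Nonempty {p : ℝ | ∃ x t : ℕ → ℝ, DFeas n X u θ x t ∧ p = Obj n μ v θ x t} :=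
        ⟨Obj n μ v θ pstar.1 pstar.2, hsub hqmem⟩
      have hFne : Set.Nonempty {p : ℝ | ∃ x t : ℕ → ℝ, FullFeas n X u θ x t ∧ p = Obj n μ v θ x t} :=
        ⟨Obj n μ v θ pstar.1 pstar.2, hqmem⟩
      refine le_antisymm ?_ ?_
      · exact csSup_le hDne (fun p hp => le_trans (hub p hp) (le_csSup hbddF hqmem))
      · exact csSup_le_csSup hbddD hFne hsub
end
end

section
/- In the finite one-dimensional screening problem, fix any allocation vector x ∈ X^n. Then the transfer program — maximize Σ_i μ(θ_i) t_i over t ∈ ℝ^n subject to all downward IC constraints and all IR constraints (given x) — has a feasible point, and it admits a unique optimal solution. -/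
open Finset

noncomputable section

/-- Feasibility of a transfer vector `t` for a fixed allocation `x`: all downward IC
constraints and all IR constraints. Indices run over `0, …, n-1`. -/
def TFeas (n : ℕ) (u : ℝ → ℝ → ℝ) (θ : ℕ → ℝ) (x t : ℕ → ℝ) : Prop :=
  (∀ i j, j < i → i < n → u (x i) (θ i) - t i ≥ u (x j) (θ i) - t j) ∧
    (∀ i, i < n → u (x i) (θ i) - t i ≥ 0)

/-- Iterative construction of the minimal information rents. `Vpre g m j` is the rent
of index `j`, correctly computed for `j < m`. -/
noncomputable def Vpre (g : ℕ → ℕ → ℝ) : ℕ → ℕ → ℝ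
  | 0 => fun _ => 0
  | m + 1 => fun j =>
      if j = m then (Finset.range m).fold max 0 (fun k => Vpre g m k + g k m)
      else Vpre g m j

lemma Vpre_stable (g : ℕ → ℕ → ℝ) : ∀ m m' j, j < m → m ≤ m' → Vpre g m' j = Vpre g m j := by
  intro m m' j hj hmm
  induction m' with
  | zero => omega
  | succ m' ih =>
    rcases eq_or_lt_of_le hmm with h | h
    · rw [h]
    · have hle : m ≤ m' := by omega
      have hne : j ≠ m' := by omega
      simp only [Vpre, if_neg hne]
      exact ih hle

/-- The minimal information rent at index `i`. -/
noncomputable def Vfun (g : ℕ → ℕ → ℝ) (i : ℕ) : ℝ := Vpre g (i + 1) i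

lemma Vfun_eq (g : ℕ → ℕ → ℝ) (i : ℕ) :
    Vfun g i = (Finset.range i).fold max 0 (fun k => Vfun g k + g k i) := by
  have h : Vfun g i = (Finset.range i).fold max 0 (fun k => Vpre g i k + g k i) := by
    show (if i = i then (Finset.range i).fold max 0 (fun k => Vpre g i k + g k i)
      else Vpre g i i) = _
    rw [if_pos rfl]
  rw [h]
  apply Finset.fold_congr
  intro k hk
  rw [Finset.mem_range] at hk
  rw [Vpre_stable g (k + 1) i k (Nat.lt_succ_self k) hk]
  rfl

lemma Vfun_nonneg (g : ℕ → ℕ → ℝ) (i : ℕ) : 0 ≤ Vfun g i := by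
  rw [Vfun_eq]
  exact (Finset.le_fold_max _).2 (Or.inl le_rfl)

lemma Vfun_ge (g : ℕ → ℕ → ℝ) {k i : ℕ} (h : k < i) : Vfun g k + g k i ≤ Vfun g i := by
  rw [Vfun_eq g i]
  exact (Finset.le_fold_max _).2 (Or.inr ⟨k, Finset.mem_range.2 h, le_rfl⟩)

lemma Vfun_min (g : ℕ → ℕ → ℝ) (n : ℕ) (W : ℕ → ℝ)
    (h0 : ∀ i, i < n → 0 ≤ W i)
    (hW : ∀ k i, k < i → i < n → W k + g k i ≤ W i) :
    ∀ i, i < n → Vfun g i ≤ W i := by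
  intro i
  induction i using Nat.strong_induction_on with
  | _ i ih =>
    intro hin
    rw [Vfun_eq]
    refine (Finset.fold_max_le _).2 ⟨h0 i hin, ?_⟩
    intro k hk
    rw [Finset.mem_range] at hk
    calc Vfun g k + g k i ≤ W k + g k i := by
          have := ih k hk (lt_trans hk hin); linarith
      _ ≤ W i := hW k i hk hin

/-- **Optimal transfers for a fixed allocation.** For any allocation vector `x` with
values in `X`, the transfer program (maximize `Σ μ_i t_i` subject to downward IC and
IR) is feasible and admits a unique optimal solution (unique on indices `< n`). -/
theorem stmt5
    (n : ℕ) (X : Set ℝ) (hX : IsCompact X)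
    (θ μ : ℕ → ℝ)
    (hθ : ∀ i j, i < j → j < n → θ i < θ j)
    (hμpos : ∀ i, i < n → 0 < μ i) (hμsum : ∑ i ∈ range n, μ i = 1)
    (u : ℝ → ℝ → ℝ)
    (huc : ContinuousOn (fun p : ℝ × ℝ => u p.1 p.2) (X ×ˢ Set.univ))
    (humono : ∀ x ∈ X, Monotone (u x))
    (hSID : ∀ x ∈ X, ∀ x' ∈ X, x < x' → ∀ a a' : ℝ, a < a' →
      u x' a - u x a < u x' a' - u x a')
    (x : ℕ → ℝ) (hxX : ∀ i, i < n → x i ∈ X) :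
    (∃ t : ℕ → ℝ, TFeas n u θ x t) ∧
    (∃ t : ℕ → ℝ, TFeas n u θ x t ∧
      (∀ t' : ℕ → ℝ, TFeas n u θ x t' →
        ∑ i ∈ range n, μ i * t' i ≤ ∑ i ∈ range n, μ i * t i) ∧
      (∀ t' : ℕ → ℝ, TFeas n u θ x t' →
        (∀ t'' : ℕ → ℝ, TFeas n u θ x t'' →
          ∑ i ∈ range n, μ i * t'' i ≤ ∑ i ∈ range n, μ i * t' i) →
        ∀ i, i < n → t' i = t i)) := by
  set g : ℕ → ℕ → ℝ := fun j i => u (x j) (θ i) - u (x j) (θ j) with hg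
  set t : ℕ → ℝ := fun i => u (x i) (θ i) - Vfun g i with ht
  have hfeas : TFeas n u θ x t := by
    constructor
    · intro i j hji hin
      have h1 : Vfun g j + g j i ≤ Vfun g i := Vfun_ge g hji
      simp only [ht, hg] at *
      linarith
    · intro i hin
      have := Vfun_nonneg g i
      simp only [ht]
      linarith
  -- optimality: for any feasible t', pointwise Vfun g i ≤ u (x i) (θ i) - t' i on i < n
  have hpt : ∀ t' : ℕ → ℝ, TFeas n u θ x t' → ∀ i, i < n → t' i ≤ t i := by
    intro t' ⟨hIC, hIR⟩ i hin
    have key : Vfun g i ≤ u (x i) (θ i) - t' i := Vfun_min g n (fun i => u (x i) (θ i) - t' i)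
      (fun i hi => hIR i hi)
      (fun k i hki hi => by
        have := hIC i k hki hi
        simp only [hg]
        linarith) i hin
    simp only [ht]
    linarith
  have hopt : ∀ t' : ℕ → ℝ, TFeas n u θ x t' →
      ∑ i ∈ range n, μ i * t' i ≤ ∑ i ∈ range n, μ i * t i := by
    intro t' ht'
    refine Finset.sum_le_sum fun i hi => ?_
    rw [Finset.mem_range] at hi
    exact mul_le_mul_of_nonneg_left (hpt t' ht' i hi) (le_of_lt (hμpos i hi))
  refine ⟨⟨t, hfeas⟩, ⟨t, hfeas, hopt, ?_⟩⟩
  intro t' ht' hopt' i hin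
  have h1 : ∑ i ∈ range n, μ i * t i ≤ ∑ i ∈ range n, μ i * t' i := hopt' t hfeas
  have h2 : ∑ i ∈ range n, μ i * t' i ≤ ∑ i ∈ range n, μ i * t i := hopt t' ht'
  have heq : ∑ i ∈ range n, μ i * t' i = ∑ i ∈ range n, μ i * t i := le_antisymm h2 h1
  have := (Finset.sum_eq_sum_iff_of_le (s := range n)
    (f := fun i => μ i * t' i) (g := fun i => μ i * t i)
    (fun i hi => mul_le_mul_of_nonneg_left (hpt t' ht' i (Finset.mem_range.1 hi))
      (le_of_lt (hμpos i (Finset.mem_range.1 hi))))).1 heq i (Finset.mem_range.2 hin)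
  exact mul_left_cancel₀ (ne_of_gt (hμpos i hin)) this
end
end

section
/- In the finite one-dimensional screening problem, suppose the allocation vector x ∈ X^n is nondecreasing (x_1 ≤ x_2 ≤ ⋯ ≤ x_n), and define transfers by t_i = u(x_i, θ_i) − Σ_{j=1}^{i−1} (u(x_j, θ_{j+1}) − u(x_j, θ_j)). Then (x, t) satisfies all IC constraints (for all pairs i, j) and all IR constraints, and t is the unique maximizer of Σ_i μ(θ_i) t_i among all transfer vectors t ∈ ℝ^n such that (x, t) satisfies all downward IC constraints and all IR constraints. -/
open Finset

noncomputable section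

/-- **Standard transfers for a monotone allocation.** If `x` is nondecreasing and
`t i = u (x i) (θ i) − Σ_{j<i} (u (x j) (θ (j+1)) − u (x j) (θ j))`, then `(x, t)`
satisfies all IC and IR constraints and `t` is the unique maximizer of `Σ μ_i t_i`
among transfers satisfying the downward IC and IR constraints. -/
theorem stmt6
    (n : ℕ) (X : Set ℝ) (hX : IsCompact X)
    (θ μ : ℕ → ℝ)
    (hθ : ∀ i j, i < j → j < n → θ i < θ j)
    (hμpos : ∀ i, i < n → 0 < μ i) (hμsum : ∑ i ∈ range n, μ i = 1)
    (u : ℝ → ℝ → ℝ)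
    (huc : ContinuousOn (fun p : ℝ × ℝ => u p.1 p.2) (X ×ˢ Set.univ))
    (humono : ∀ x ∈ X, Monotone (u x))
    (hSID : ∀ x ∈ X, ∀ x' ∈ X, x < x' → ∀ a a' : ℝ, a < a' →
      u x' a - u x a < u x' a' - u x a')
    (x : ℕ → ℝ) (hxX : ∀ i, i < n → x i ∈ X)
    (hxmono : ∀ i j, i ≤ j → j < n → x i ≤ x j)
    (t : ℕ → ℝ)
    (ht : ∀ i, i < n →
      t i = u (x i) (θ i) - ∑ j ∈ range i, (u (x j) (θ (j + 1)) - u (x j) (θ j))) :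
    (∀ i j, i < n → j < n → u (x i) (θ i) - t i ≥ u (x j) (θ i) - t j) ∧
    (∀ i, i < n → u (x i) (θ i) - t i ≥ 0) ∧
    (∀ t' : ℕ → ℝ, TFeas n u θ x t' →
      ∑ i ∈ range n, μ i * t' i ≤ ∑ i ∈ range n, μ i * t i) ∧
    (∀ t' : ℕ → ℝ, TFeas n u θ x t' →
      ∑ i ∈ range n, μ i * t' i = ∑ i ∈ range n, μ i * t i →
      ∀ i, i < n → t' i = t i) := by

  have wid : ∀ p ∈ X, ∀ q ∈ X, p ≤ q → ∀ a a' : ℝ, a ≤ a' →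
      u q a - u p a ≤ u q a' - u p a' := by
    intro p hp q hq hpq a a' ha
    rcases eq_or_lt_of_le hpq with h | h
    · subst h; simp
    rcases eq_or_lt_of_le ha with h2 | h2
    · subst h2; exact le_rfl
    · exact (hSID p hp q hq h a a' h2).le
  set S : ℕ → ℝ := fun i => ∑ j ∈ range i, (u (x j) (θ (j + 1)) - u (x j) (θ j)) with hS
  have htS : ∀ i, i < n → u (x i) (θ i) - t i = S i := by
    intro i hi; rw [ht i hi]; ring
  have hSstep : ∀ m, S (m + 1) = S m + (u (x m) (θ (m + 1)) - u (x m) (θ m)) := by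
    intro m; simp only [hS, Finset.sum_range_succ]
  have hSnonneg : ∀ i, i < n → 0 ≤ S i := by
    intro i hi
    apply Finset.sum_nonneg
    intro j hj
    have hj' := Finset.mem_range.mp hj
    have h1 : θ j < θ (j + 1) := hθ j (j + 1) (Nat.lt_succ_self j) (by omega)
    have h2 := humono (x j) (hxX j (by omega)) h1.le
    linarith
  have tel : ∀ k a b : ℕ, a ≤ b →
      ∑ m ∈ Finset.Ico a b, (u (x k) (θ (m + 1)) - u (x k) (θ m))
        = u (x k) (θ b) - u (x k) (θ a) := by
    intro k a b hab
    rw [Finset.sum_Ico_eq_sub _ hab, Finset.sum_range_sub (fun m => u (x k) (θ m)),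
      Finset.sum_range_sub (fun m => u (x k) (θ m))]
    ring
  have hIC : ∀ i j, i < n → j < n → u (x i) (θ i) - t i ≥ u (x j) (θ i) - t j := by
    intro i j hi hj
    rw [htS i hi]
    have hdiff : u (x j) (θ i) - u (x j) (θ j) + S j ≤ S i := by
      rcases le_or_gt j i with hji | hij
      · have e1 : S i - S j = ∑ m ∈ Finset.Ico j i, (u (x m) (θ (m + 1)) - u (x m) (θ m)) := by
          rw [hS, eq_comm, Finset.sum_Ico_eq_sub _ hji]
        have e2 := tel j j i hji
        have key : ∑ m ∈ Finset.Ico j i, (u (x j) (θ (m + 1)) - u (x j) (θ m))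
            ≤ ∑ m ∈ Finset.Ico j i, (u (x m) (θ (m + 1)) - u (x m) (θ m)) := by
          apply Finset.sum_le_sum
          intro m hm
          obtain ⟨hm1, hm2⟩ := Finset.mem_Ico.mp hm
          have hθm : θ m ≤ θ (m + 1) := (hθ m (m + 1) (Nat.lt_succ_self m) (by omega)).le
          have := wid (x j) (hxX j hj) (x m) (hxX m (by omega))
            (hxmono j m hm1 (by omega)) (θ m) (θ (m + 1)) hθm
          linarith
        linarith
      · have e1 : S j - S i = ∑ m ∈ Finset.Ico i j, (u (x m) (θ (m + 1)) - u (x m) (θ m)) := by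
          rw [hS, eq_comm, Finset.sum_Ico_eq_sub _ hij.le]
        have e2 := tel j i j hij.le
        have key : ∑ m ∈ Finset.Ico i j, (u (x m) (θ (m + 1)) - u (x m) (θ m))
            ≤ ∑ m ∈ Finset.Ico i j, (u (x j) (θ (m + 1)) - u (x j) (θ m)) := by
          apply Finset.sum_le_sum
          intro m hm
          obtain ⟨hm1, hm2⟩ := Finset.mem_Ico.mp hm
          have hθm : θ m ≤ θ (m + 1) := (hθ m (m + 1) (Nat.lt_succ_self m) (by omega)).le
          have := wid (x m) (hxX m (by omega)) (x j) (hxX j hj)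
            (hxmono m j hm2.le hj) (θ m) (θ (m + 1)) hθm
          linarith
        linarith
    have := htS j hj
    linarith
  have hIR : ∀ i, i < n → u (x i) (θ i) - t i ≥ 0 := by
    intro i hi; rw [htS i hi]; exact hSnonneg i hi
  have hle : ∀ t' : ℕ → ℝ, TFeas n u θ x t' → ∀ i, i < n → t' i ≤ t i := by
    intro t' ⟨hdic, hir⟩ i hi
    induction i with
    | zero =>
      have h0 := hir 0 hi
      have := htS 0 hi
      have hS0 : S 0 = 0 := by simp [hS]
      linarith
    | succ m ih =>
      have hm : m < n := by omega
      have hiH := ih hm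
      have hic := hdic (m + 1) m (Nat.lt_succ_self m) hi
      have h1 := htS (m + 1) hi
      have h2 := htS m hm
      have h3 := hSstep m
      linarith
  refine ⟨hIC, hIR, ?_, ?_⟩
  · intro t' hfeas
    apply Finset.sum_le_sum
    intro i hi
    have hi' := Finset.mem_range.mp hi
    exact mul_le_mul_of_nonneg_left (hle t' hfeas i hi') (hμpos i hi').le
  · intro t' hfeas hsum i hi
    have hzero : ∑ i ∈ range n, μ i * (t i - t' i) = 0 := by
      have : ∑ i ∈ range n, μ i * (t i - t' i)
          = ∑ i ∈ range n, μ i * t i - ∑ i ∈ range n, μ i * t' i := by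
        rw [← Finset.sum_sub_distrib]; apply Finset.sum_congr rfl; intro j _; ring
      rw [this, hsum]; ring
    have hterm : ∀ j ∈ range n, 0 ≤ μ j * (t j - t' j) := by
      intro j hj
      have hj' := Finset.mem_range.mp hj
      have := hle t' hfeas j hj'
      have := (hμpos j hj').le
      nlinarith
    have := (Finset.sum_eq_zero_iff_of_nonneg hterm).mp hzero i (Finset.mem_range.mpr hi)
    have hμ := hμpos i hi
    nlinarith
end
end

section
/- In the finite one-dimensional screening problem, suppose the surplus function s(x, θ) = u(x, θ) + v(x, θ) has weak single-crossing differences. Then every optimal solution (x, t) of the downward-IC program has a monotone allocation rule: x_1 ≤ x_2 ≤ ⋯ ≤ x_n. -/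
open Finset

noncomputable section

lemma sum_sub_of_eq_off {n k : ℕ} (hk : k < n) (f g : ℕ → ℝ)
    (h : ∀ i, i ≠ k → f i = g i) :
    (∑ i ∈ range n, f i) - ∑ i ∈ range n, g i = f k - g k := by
  rw [← Finset.sum_sub_distrib]
  exact Finset.sum_eq_single_of_mem k (mem_range.2 hk)
    (fun b _ hb => by rw [h b hb]; ring)

lemma sum_sub_of_eq_off2 {n k l : ℕ} (hk : k < n) (hl : l < n) (hkl : k ≠ l)
    (f g : ℕ → ℝ) (h : ∀ i, i ≠ k → i ≠ l → f i = g i) :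
    (∑ i ∈ range n, f i) - ∑ i ∈ range n, g i = (f k - g k) + (f l - g l) := by
  rw [← Finset.sum_sub_distrib]
  exact Finset.sum_eq_add_of_mem k l (mem_range.2 hk) (mem_range.2 hl) hkl
    (fun c _ hc => by rw [h c hc.1 hc.2]; ring)

/-- **Monotonicity of optimal allocations.** If the surplus `u + v` has weak
single-crossing differences, every optimal solution of the downward-IC program has a
nondecreasing allocation rule. -/
theorem stmt7
    (n : ℕ) (X : Set ℝ) (hX : IsCompact X)
    (θ μ : ℕ → ℝ)
    (hθ : ∀ i j, i < j → j < n → θ i < θ j)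
    (hμpos : ∀ i, i < n → 0 < μ i) (hμsum : ∑ i ∈ range n, μ i = 1)
    (u v : ℝ → ℝ → ℝ)
    (huc : ContinuousOn (fun p : ℝ × ℝ => u p.1 p.2) (X ×ˢ Set.univ))
    (hvc : ContinuousOn (fun p : ℝ × ℝ => v p.1 p.2) (X ×ˢ Set.univ))
    (humono : ∀ x ∈ X, Monotone (u x))
    (hSID : ∀ x ∈ X, ∀ x' ∈ X, x < x' → ∀ a a' : ℝ, a < a' →
      u x' a - u x a < u x' a' - u x a')
    (hWSCD : ∀ x ∈ X, ∀ x' ∈ X, x < x' → ∀ a a' : ℝ, a < a' →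
      0 < (u x' a + v x' a) - (u x a + v x a) →
      0 < (u x' a' + v x' a') - (u x a' + v x a'))
    (x t : ℕ → ℝ) (hfeas : DFeas n X u θ x t)
    (hopt : ∀ x' t' : ℕ → ℝ, DFeas n X u θ x' t' →
      Obj n μ v θ x' t' ≤ Obj n μ v θ x t) :
    ∀ i j, i ≤ j → j < n → x i ≤ x j := by
  -- weak version of increasing differences
  have hSIDw : ∀ xa ∈ X, ∀ xb ∈ X, xa ≤ xb → ∀ c d : ℝ, c ≤ d →
      u xb c - u xa c ≤ u xb d - u xa d := by
    intro xa ha xb hb hab c d hcd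
    rcases hab.eq_or_lt with h | h
    · subst h; simp
    rcases hcd.eq_or_lt with h2 | h2
    · subst h2; exact le_rfl
    · exact (hSID xa ha xb hb h c d h2).le
  suffices H : ∀ q, ∀ x t : ℕ → ℝ, DFeas n X u θ x t →
      (∀ x' t' : ℕ → ℝ, DFeas n X u θ x' t' → Obj n μ v θ x' t' ≤ Obj n μ v θ x t) →
      ∀ i j, i ≤ j → j ≤ q → j < n → x i ≤ x j by
    intro i j hij hjn
    exact H j x t hfeas hopt i j hij le_rfl hjn
  intro q
  induction q with
  | zero =>
      intro x t _ _ i j hij hj0 _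
      have hij' : i = j := by omega
      rw [hij']
  | succ p ih =>
      intro x t hfeas hopt i j hij hjq hjn
      by_cases hjp : j ≤ p
      · exact ih x t hfeas hopt i j hij hjp hjn
      have hj : j = p + 1 := by omega
      subst hj
      have hpn : p < n := by omega
      rcases eq_or_lt_of_le hij with h | hlt
      · rw [h]
      have hip : i ≤ p := by omega
      have key : x p ≤ x (p + 1) := by
        by_contra hcon
        push_neg at hcon
        have hXm := hfeas.1
        have hIC := hfeas.2.1
        have hIR := hfeas.2.2
        have hxpX : x p ∈ X := hXm p hpn
        have hxrX : x (p + 1) ∈ X := hXm (p + 1) hjn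
        have hab : θ p < θ (p + 1) := hθ p (p + 1) (Nat.lt_succ_self p) hjn
        have hprefix : ∀ k, k ≤ p → x k ≤ x p := fun k hk =>
          ih x t hfeas hopt k p hk le_rfl hpn
        set τ : ℝ := t p - (u (x p) (θ p) - u (x (p + 1)) (θ p)) with hτ
        have hUp : u (x (p + 1)) (θ p) - τ = u (x p) (θ p) - t p := by rw [hτ]; ring
        -- Modification 1: type p gets allocation x (p+1) with rent preserved.
        have feas1 : DFeas n X u θ (fun i => if i = p then x (p + 1) else x i)
            (fun i => if i = p then τ else t i) := by
          refine ⟨?_, ?_, ?_⟩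
          · intro i hi
            dsimp only
            split_ifs with h1
            · exact hxrX
            · exact hXm i hi
          · intro i j hji hin
            dsimp only
            by_cases hi : i = p
            · have hjne : j ≠ p := by omega
              rw [if_pos hi, if_pos hi, if_neg hjne, if_neg hjne, hi]
              have h3 := hIC p j (by omega) hpn
              linarith
            · by_cases hjj : j = p
              · rw [if_neg hi, if_neg hi, if_pos hjj, if_pos hjj]
                have hpi : p < i := by omega
                have h3 := hIC i p hpi hin
                have h4 := hSIDw (x (p + 1)) hxrX (x p) hxpX hcon.le
                  (θ p) (θ i) (hθ p i hpi hin).le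
                linarith
              · rw [if_neg hi, if_neg hi, if_neg hjj, if_neg hjj]
                exact hIC i j hji hin
          · intro i hi
            dsimp only
            by_cases h1 : i = p
            · rw [if_pos h1, if_pos h1, h1]
              have h3 := hIR p hpn
              linarith
            · rw [if_neg h1, if_neg h1]
              exact hIR i hi
        have hs1 : Obj n μ v θ (fun i => if i = p then x (p + 1) else x i)
              (fun i => if i = p then τ else t i) - Obj n μ v θ x t
            = μ p * (v (x (p + 1)) (θ p) + τ) - μ p * (v (x p) (θ p) + t p) := by
          have hs := sum_sub_of_eq_off (n := n) hpn
            (fun i => μ i * (v (if i = p then x (p + 1) else x i) (θ i)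
              + (if i = p then τ else t i)))
            (fun i => μ i * (v (x i) (θ i) + t i))
            (fun i hi => by simp [hi])
          simp only [if_pos rfl] at hs
          exact hs
        -- optimality ⇒ surplus comparison at θ p
        have hAle : v (x (p + 1)) (θ p) + τ ≤ v (x p) (θ p) + t p := by
          have hobj1 := hopt _ _ feas1
          have hABle : μ p * (v (x (p + 1)) (θ p) + τ) ≤ μ p * (v (x p) (θ p) + t p) := by
            linarith
          exact le_of_mul_le_mul_left hABle (hμpos p hpn)
        have hΔa_ge : 0 ≤ (u (x p) (θ p) + v (x p) (θ p))
            - (u (x (p + 1)) (θ p) + v (x (p + 1)) (θ p)) := by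
          rw [hτ] at hAle; linarith
        -- Modification 2: type p+1 gets type p's bundle.
        have feas2 : DFeas n X u θ (fun i => if i = p + 1 then x p else x i)
            (fun i => if i = p + 1 then t p else t i) := by
          refine ⟨?_, ?_, ?_⟩
          · intro i hi
            dsimp only
            split_ifs with h1
            · exact hxpX
            · exact hXm i hi
          · intro i j hji hin
            dsimp only
            by_cases hi : i = p + 1
            · have hjne : j ≠ p + 1 := by omega
              rw [if_pos hi, if_pos hi, if_neg hjne, if_neg hjne, hi]
              have hjle : j ≤ p := by omega
              rcases eq_or_lt_of_le hjle with h3 | h3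
              · rw [h3]
              · have h4 := hIC p j h3 hpn
                have h5 := hSIDw (x j) (hXm j (by omega)) (x p) hxpX
                  (hprefix j h3.le) (θ p) (θ (p + 1)) hab.le
                linarith
            · by_cases hjj : j = p + 1
              · rw [if_neg hi, if_neg hi, if_pos hjj, if_pos hjj]
                exact hIC i p (by omega) hin
              · rw [if_neg hi, if_neg hi, if_neg hjj, if_neg hjj]
                exact hIC i j hji hin
          · intro i hi
            dsimp only
            by_cases h1 : i = p + 1
            · rw [if_pos h1, if_pos h1, h1]
              have h3 := hIR p hpn
              have h4 := humono (x p) hxpX hab.le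
              linarith
            · rw [if_neg h1, if_neg h1]
              exact hIR i hi
        have hs2 : Obj n μ v θ (fun i => if i = p + 1 then x p else x i)
              (fun i => if i = p + 1 then t p else t i) - Obj n μ v θ x t
            = μ (p + 1) * (v (x p) (θ (p + 1)) + t p)
              - μ (p + 1) * (v (x (p + 1)) (θ (p + 1)) + t (p + 1)) := by
          have hs := sum_sub_of_eq_off (n := n) hjn
            (fun i => μ i * (v (if i = p + 1 then x p else x i) (θ i)
              + (if i = p + 1 then t p else t i)))
            (fun i => μ i * (v (x i) (θ i) + t i))
            (fun i hi => by simp [hi])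
          simp only [if_pos rfl] at hs
          exact hs
        have hBle : v (x p) (θ (p + 1)) + t p
            ≤ v (x (p + 1)) (θ (p + 1)) + t (p + 1) := by
          have hobj2 := hopt _ _ feas2
          have hABle : μ (p + 1) * (v (x p) (θ (p + 1)) + t p)
              ≤ μ (p + 1) * (v (x (p + 1)) (θ (p + 1)) + t (p + 1)) := by
            linarith
          exact le_of_mul_le_mul_left hABle (hμpos (p + 1) hjn)
        have hICrp := hIC (p + 1) p (Nat.lt_succ_self p) hjn
        have hΔb_le : (u (x p) (θ (p + 1)) + v (x p) (θ (p + 1)))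
            - (u (x (p + 1)) (θ (p + 1)) + v (x (p + 1)) (θ (p + 1))) ≤ 0 := by
          linarith
        have hΔa_le : (u (x p) (θ p) + v (x p) (θ p))
            - (u (x (p + 1)) (θ p) + v (x (p + 1)) (θ p)) ≤ 0 := by
          by_contra hpos
          push_neg at hpos
          have := hWSCD (x (p + 1)) hxrX (x p) hxpX hcon (θ p) (θ (p + 1)) hab hpos
          linarith
        -- the modified mechanism 1 is also optimal
        have hA1B1 : v (x (p + 1)) (θ p) + τ = v (x p) (θ p) + t p := by
          rw [hτ]; linarith
        have hEq1 : Obj n μ v θ (fun i => if i = p then x (p + 1) else x i)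
            (fun i => if i = p then τ else t i) = Obj n μ v θ x t := by
          rw [hA1B1] at hs1
          linarith
        have opt1 : ∀ x' t' : ℕ → ℝ, DFeas n X u θ x' t' →
            Obj n μ v θ x' t' ≤ Obj n μ v θ (fun i => if i = p then x (p + 1) else x i)
              (fun i => if i = p then τ else t i) :=
          fun x' t' h => le_of_le_of_eq (hopt x' t' h) hEq1.symm
        have hbelow : ∀ k, k < p → x k ≤ x (p + 1) := by
          intro k hk
          have h := ih _ _ feas1 opt1 k p hk.le le_rfl hpn
          simpa [Nat.ne_of_lt hk] using h
        -- Modification 3: pool p and p+1 at allocation x (p+1) with transfer τ.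
        have feas3 : DFeas n X u θ
            (fun i => if i = p ∨ i = p + 1 then x (p + 1) else x i)
            (fun i => if i = p ∨ i = p + 1 then τ else t i) := by
          refine ⟨?_, ?_, ?_⟩
          · intro i hi
            dsimp only
            split_ifs with h1
            · exact hxrX
            · exact hXm i hi
          · intro i j hji hin
            dsimp only
            by_cases hi : i = p ∨ i = p + 1
            · by_cases hjj : j = p ∨ j = p + 1
              · -- forces j = p, i = p+1, same bundle
                have hi2 : i = p + 1 := by omega
                have hj2 : j = p := by omega
                rw [if_pos hi, if_pos hi, if_pos hjj, if_pos hjj]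
              · rw [if_pos hi, if_pos hi, if_neg hjj, if_neg hjj]
                rcases hi with h1 | h1
                · rw [h1]
                  have h3 := hIC p j (by omega) hpn
                  linarith
                · rw [h1]
                  have hjlt : j < p := by omega
                  have h3 := hIC p j hjlt hpn
                  have h4 := hSIDw (x j) (hXm j (by omega)) (x (p + 1)) hxrX
                    (hbelow j hjlt) (θ p) (θ (p + 1)) hab.le
                  linarith
            · by_cases hjj : j = p ∨ j = p + 1
              · rw [if_neg hi, if_neg hi, if_pos hjj, if_pos hjj]
                have hpi : p < i := by omega
                have h3 := hIC i p hpi hin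
                have h4 := hSIDw (x (p + 1)) hxrX (x p) hxpX hcon.le
                  (θ p) (θ i) (hθ p i hpi hin).le
                linarith
              · rw [if_neg hi, if_neg hi, if_neg hjj, if_neg hjj]
                exact hIC i j hji hin
          · intro i hi
            dsimp only
            by_cases h1 : i = p ∨ i = p + 1
            · rw [if_pos h1, if_pos h1]
              rcases h1 with h1 | h1
              · rw [h1]
                have h3 := hIR p hpn
                linarith
              · rw [h1]
                have h3 := hIR p hpn
                have h4 := humono (x (p + 1)) hxrX hab.le
                linarith
            · rw [if_neg h1, if_neg h1]
              exact hIR i hi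
        have hs3 : Obj n μ v θ (fun i => if i = p ∨ i = p + 1 then x (p + 1) else x i)
              (fun i => if i = p ∨ i = p + 1 then τ else t i) - Obj n μ v θ x t
            = (μ p * (v (x (p + 1)) (θ p) + τ) - μ p * (v (x p) (θ p) + t p))
              + (μ (p + 1) * (v (x (p + 1)) (θ (p + 1)) + τ)
                - μ (p + 1) * (v (x (p + 1)) (θ (p + 1)) + t (p + 1))) := by
          have hs := sum_sub_of_eq_off2 (n := n) hpn hjn (by omega)
            (fun i => μ i * (v (if i = p ∨ i = p + 1 then x (p + 1) else x i) (θ i)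
              + (if i = p ∨ i = p + 1 then τ else t i)))
            (fun i => μ i * (v (x i) (θ i) + t i))
            (fun i hi1 hi2 => by simp [hi1, hi2])
          simp only [eq_self_iff_true, true_or, or_true, if_true] at hs
          exact hs
        have hτler : τ ≤ t (p + 1) := by
          have hobj3 := hopt _ _ feas3
          rw [hA1B1] at hs3
          have hABle : μ (p + 1) * (v (x (p + 1)) (θ (p + 1)) + τ)
              ≤ μ (p + 1) * (v (x (p + 1)) (θ (p + 1)) + t (p + 1)) := by
            linarith
          have := le_of_mul_le_mul_left hABle (hμpos (p + 1) hjn)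
          linarith
        -- strict increasing differences force τ > t (p+1): contradiction
        have hstrict := hSID (x (p + 1)) hxrX (x p) hxpX hcon (θ p) (θ (p + 1)) hab
        rw [hτ] at hτler
        linarith
      exact le_trans (ih x t hfeas hopt i p hip le_rfl hpn) key
end
end

section
/- (Local to global.) Let θ_k < θ_j < θ_i be real types with allocations x_i, x_j, x_k ∈ X and transfers t_i, t_j, t_k ∈ ℝ. If the constraints IC[i→j] and IC[j→k] hold and x_j ≥ x_k, then IC[i→k] holds. -/
/-- **Local to global (Lemma: Local to global).**
If IC[i→j] and IC[j→k] hold, θ_k < θ_j < θ_i, and x_j ≥ x_k, then IC[i→k] holds,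
where `u` has strict increasing differences on `X × ℝ`. -/
theorem stmt8
    (X : Set ℝ) (u : ℝ → ℝ → ℝ)
    (hSID : ∀ x ∈ X, ∀ x' ∈ X, x < x' → ∀ θ θ' : ℝ, θ < θ' →
      u x' θ - u x θ < u x' θ' - u x θ')
    (θi θj θk : ℝ) (hkj : θk < θj) (hji : θj < θi)
    (xi xj xk : ℝ) (hxi : xi ∈ X) (hxj : xj ∈ X) (hxk : xk ∈ X)
    (ti tj tk : ℝ)
    (hICij : u xi θi - ti ≥ u xj θi - tj)
    (hICjk : u xj θj - tj ≥ u xk θj - tk)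
    (hx : xj ≥ xk) :
    u xi θi - ti ≥ u xk θi - tk := by
  rcases eq_or_lt_of_le hx.ge.le with h | h
  · subst h; linarith
  · have := hSID xk hxk xj hxj h θj θi hji
    linarith
end

section
/- (Global to local.) Let θ_k < θ_j < θ_i be real types with allocations x_i, x_j, x_k ∈ X and transfers t_i, t_j, t_k ∈ ℝ. If the constraints IC[i→k] and IC[j→k] hold with equality (bind) and x_j ≤ x_k, then IC[i→j] holds. -/
/-- **Global to local (Lemma: Global to local).**
If IC[i→k] and IC[j→k] bind (hold with equality), θ_k < θ_j < θ_i, and x_j ≤ x_k,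
then IC[i→j] holds, where `u` has strict increasing differences on `X × ℝ`. -/
theorem stmt9
    (X : Set ℝ) (u : ℝ → ℝ → ℝ)
    (hSID : ∀ x ∈ X, ∀ x' ∈ X, x < x' → ∀ θ θ' : ℝ, θ < θ' →
      u x' θ - u x θ < u x' θ' - u x θ')
    (θi θj θk : ℝ) (hkj : θk < θj) (hji : θj < θi)
    (xi xj xk : ℝ) (hxi : xi ∈ X) (hxj : xj ∈ X) (hxk : xk ∈ X)
    (ti tj tk : ℝ)
    (hICik : u xi θi - ti = u xk θi - tk)
    (hICjk : u xj θj - tj = u xk θj - tk)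
    (hx : xj ≤ xk) :
    u xi θi - ti ≥ u xj θi - tj := by
  rcases lt_or_eq_of_le hx with h | h
  · have := hSID xj hxj xk hxk h θj θi hji
    linarith
  · subst h
    linarith
end

section
/- Let θ_1 < θ_2 < ⋯ < θ_n be real types with allocations x ∈ X^n and transfers t ∈ ℝ^n. If x is nondecreasing (x_1 ≤ ⋯ ≤ x_n) and the local downward constraint IC[(i+1)→i] binds (holds with equality) for every i = 1, …, n−1, then all upward IC constraints are satisfied: IC[i→j] holds for all i < j. -/
/-- If the allocation rule is nondecreasing and every local downward IC constraint
IC[(i+1)→i] binds, then all upward IC constraints IC[i→j] (for i < j) are satisfied.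
Types are `θ 0 < θ 1 < ⋯ < θ (n-1)`, allocations lie in `X`, and `u` has strict
increasing differences on `X × ℝ`. -/
theorem stmt10
    (n : ℕ) (X : Set ℝ) (u : ℝ → ℝ → ℝ)
    (hSID : ∀ x ∈ X, ∀ x' ∈ X, x < x' → ∀ θ θ' : ℝ, θ < θ' →
      u x' θ - u x θ < u x' θ' - u x θ')
    (θ x t : ℕ → ℝ)
    (hθ : ∀ i j, i < j → j < n → θ i < θ j)
    (hxX : ∀ i, i < n → x i ∈ X)
    (hxmono : ∀ i j, i ≤ j → j < n → x i ≤ x j)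
    (hbind : ∀ i, i + 1 < n →
      u (x (i + 1)) (θ (i + 1)) - t (i + 1) = u (x i) (θ (i + 1)) - t i) :
    ∀ i j, i < j → j < n → u (x i) (θ i) - t i ≥ u (x j) (θ i) - t j := by
  intro i j
  induction j with
  | zero => intro h _; omega
  | succ k ih =>
    intro hij hjn
    have hkn : k < n := Nat.lt_of_succ_lt hjn
    have key : u (x k) (θ i) - t k ≥ u (x (k+1)) (θ i) - t (k+1) := by
      have hb := hbind k hjn
      have hθik : θ i < θ (k+1) := hθ i (k+1) (by omega) hjn
      rcases lt_or_eq_of_le (hxmono k (k+1) (by omega) hjn) with h | h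
      · have := hSID (x k) (hxX k hkn) (x (k+1)) (hxX (k+1) hjn) h (θ i) (θ (k+1)) hθik
        linarith
      · rw [← h] at hb ⊢; linarith
    rcases Nat.lt_or_ge i k with h | h
    · have := ih h hkn
      linarith
    · have : i = k := by omega
      subst this; exact key
end

section
/- Any standard one-dimensional screening problem has a solution: there exists a measurable IC and IR mechanism (x*, t*) with bounded transfer t* whose principal payoff ∫_Θ (v(x*(θ), θ) + t*(θ)) dμ is greater than or equal to the principal's payoff of every measurable IC and IR mechanism (x, t) with μ-integrable transfer. -/
open MeasureTheory Set

noncomputable section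

open Filter Topology

/-- Extraction of a pointwise convergent subsequence on a countable set. -/
lemma subseq_conv_on_countable {A B : ℝ} (s : Set ℝ) (hs : s.Countable)
    (f : ℕ → ℝ → ℝ) (hbd : ∀ n a, f n a ∈ Icc A B) :
    ∃ φ : ℕ → ℕ, StrictMono φ ∧ ∃ L : ℝ → ℝ,
      ∀ a ∈ s, Tendsto (fun k => f (φ k) a) atTop (𝓝 (L a)) := by
  haveI : Countable s := hs.to_subtype
  set F : ℕ → (s → Icc A B) := fun n a => ⟨f n a.1, hbd n a.1⟩ with hF
  obtain ⟨G, -, φ, hφ, hconv⟩ :=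
    (isCompact_univ : IsCompact (univ : Set (s → Icc A B))).tendsto_subseq
      (fun n => mem_univ (F n))
  rw [tendsto_pi_nhds] at hconv
  classical
  refine ⟨φ, hφ, fun a => if h : a ∈ s then (G ⟨a, h⟩ : ℝ) else 0, fun a ha => ?_⟩
  have := (continuous_subtype_val.tendsto (G ⟨a, ha⟩)).comp (hconv ⟨a, ha⟩)
  simpa [hF, dif_pos ha, Function.comp_def] using this

/-- **Helly's selection theorem**: a uniformly bounded sequence of monotone functions
on `ℝ` has a pointwise convergent subsequence with monotone limit. -/
lemma helly {A B : ℝ} (f : ℕ → ℝ → ℝ) (hmono : ∀ n, Monotone (f n))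
    (hbd : ∀ n a, f n a ∈ Icc A B) :
    ∃ φ : ℕ → ℕ, StrictMono φ ∧ ∃ g : ℝ → ℝ, Monotone g ∧
      ∀ a, Tendsto (fun k => f (φ k) a) atTop (𝓝 (g a)) := by
  classical
  obtain ⟨φ₁, hφ₁, L, hL⟩ := subseq_conv_on_countable (Set.range ((↑) : ℚ → ℝ))
    (Set.countable_range _) f hbd
  have hLmem : ∀ q : ℚ, L q ∈ Icc A B := fun q =>
    ⟨le_of_tendsto_of_tendsto' tendsto_const_nhds (hL q ⟨q, rfl⟩) fun k => (hbd _ _).1,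
     le_of_tendsto_of_tendsto' (hL q ⟨q, rfl⟩) tendsto_const_nhds fun k => (hbd _ _).2⟩
  have hLmono : ∀ q q' : ℚ, q ≤ q' → L q ≤ L q' := fun q q' hqq' =>
    le_of_tendsto_of_tendsto' (hL q ⟨q, rfl⟩) (hL q' ⟨q', rfl⟩)
      (fun k => hmono _ (by exact_mod_cast hqq'))
  set Lq : ℚ → ℝ := fun q => L q with hLq
  set hi : ℝ → ℝ := fun a => sInf (Lq '' {q : ℚ | a < (q : ℝ)}) with hhi
  set lo : ℝ → ℝ := fun a => sSup (Lq '' {q : ℚ | (q : ℝ) < a}) with hlo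
  have hne_hi : ∀ a, (Lq '' {q : ℚ | a < (q : ℝ)}).Nonempty := fun a => by
    obtain ⟨q, hq⟩ := exists_rat_gt a; exact ⟨Lq q, ⟨q, hq, rfl⟩⟩
  have hne_lo : ∀ a, (Lq '' {q : ℚ | (q : ℝ) < a}).Nonempty := fun a => by
    obtain ⟨q, hq⟩ := exists_rat_lt a; exact ⟨Lq q, ⟨q, hq, rfl⟩⟩
  have hbdd_hi : ∀ a, BddBelow (Lq '' {q : ℚ | a < (q : ℝ)}) := fun a =>
    ⟨A, fun x ⟨q, _, hq⟩ => hq ▸ (hLmem q).1⟩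
  have hbdd_lo : ∀ a, BddAbove (Lq '' {q : ℚ | (q : ℝ) < a}) := fun a =>
    ⟨B, fun x ⟨q, _, hq⟩ => hq ▸ (hLmem q).2⟩
  have hlo_le_hi : ∀ a, lo a ≤ hi a := fun a => by
    apply csSup_le (hne_lo a)
    rintro x ⟨q, (hq : (q:ℝ) < a), rfl⟩
    apply le_csInf (hne_hi a)
    rintro y ⟨q', (hq' : a < (q':ℝ)), rfl⟩
    exact hLmono q q' (by exact_mod_cast le_of_lt (hq.trans hq'))
  -- the bad (jump) set is countable
  set Bad : Set ℝ := {a | lo a < hi a} with hBad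
  have hBadc : Bad.Countable := by
    have hch : ∀ a ∈ Bad, ∃ r : ℚ, lo a < r ∧ (r : ℝ) < hi a := fun a ha =>
      exists_rat_btwn ha
    choose! r hr using hch
    have hinj : InjOn r Bad := by
      intro a ha b hb hab
      by_contra hne
      rcases lt_or_gt_of_ne hne with h | h
      · obtain ⟨q, hq1, hq2⟩ := exists_rat_btwn h
        have h1 : hi a ≤ Lq q := csInf_le (hbdd_hi a) ⟨q, hq1, rfl⟩
        have h2 : Lq q ≤ lo b := le_csSup (hbdd_lo b) ⟨q, hq2, rfl⟩
        have : (r a : ℝ) < r b := lt_of_lt_of_le ((hr a ha).2.trans_le (h1.trans h2)) (le_of_lt (hr b hb).1)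
        exact absurd (congrArg (fun q : ℚ => (q : ℝ)) hab) (ne_of_lt this)
      · obtain ⟨q, hq1, hq2⟩ := exists_rat_btwn h
        have h1 : hi b ≤ Lq q := csInf_le (hbdd_hi b) ⟨q, hq1, rfl⟩
        have h2 : Lq q ≤ lo a := le_csSup (hbdd_lo a) ⟨q, hq2, rfl⟩
        have : (r b : ℝ) < r a := lt_of_lt_of_le ((hr b hb).2.trans_le (h1.trans h2)) (le_of_lt (hr a ha).1)
        exact absurd (congrArg (fun q : ℚ => (q : ℝ)) hab) (ne_of_gt this)
    exact Set.countable_of_injective_of_countable_image hinj (Set.to_countable _)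
  have hgood : ∀ a ∉ Bad, Tendsto (fun k => f (φ₁ k) a) atTop (𝓝 (hi a)) := by
    intro a ha
    have heq : lo a = hi a := le_antisymm (hlo_le_hi a) (not_lt.1 ha)
    rw [tendsto_order]
    constructor
    · intro c hc
      rw [← heq] at hc
      obtain ⟨x, ⟨q, (hq : (q:ℝ) < a), rfl⟩, hx⟩ := exists_lt_of_lt_csSup (hne_lo a) hc
      have := (tendsto_order.1 (hL q ⟨q, rfl⟩)).1 c hx
      exact this.mono fun k hk => hk.trans_le (hmono _ hq.le)
    · intro c hc
      obtain ⟨x, ⟨q, (hq : a < (q:ℝ)), rfl⟩, hx⟩ := exists_lt_of_csInf_lt (hne_hi a) hc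
      have := (tendsto_order.1 (hL q ⟨q, rfl⟩)).2 c hx
      exact this.mono fun k hk => lt_of_le_of_lt (hmono _ hq.le) hk
  obtain ⟨φ₂, hφ₂, L₂, hL₂⟩ := subseq_conv_on_countable Bad hBadc
    (fun n => f (φ₁ n)) (fun n a => hbd _ _)
  refine ⟨φ₁ ∘ φ₂, hφ₁.comp hφ₂, ?_⟩
  have hconv : ∀ a, ∃ l, Tendsto (fun k => f (φ₁ (φ₂ k)) a) atTop (𝓝 l) := by
    intro a
    by_cases ha : a ∈ Bad
    · exact ⟨L₂ a, hL₂ a ha⟩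
    · exact ⟨hi a, (hgood a ha).comp hφ₂.tendsto_atTop⟩
  choose g hg using hconv
  exact ⟨g, fun a b hab => le_of_tendsto_of_tendsto' (hg a) (hg b) (fun k => hmono _ hab), hg⟩

/-- Monotone extension of a bounded monotone-on-a-set function. -/
lemma exists_monotone_extension {s : Set ℝ} {f : ℝ → ℝ} {A B : ℝ} (hAB : A ≤ B)
    (hf : MonotoneOn f s) (hbd : ∀ θ ∈ s, f θ ∈ Icc A B) :
    ∃ g : ℝ → ℝ, Monotone g ∧ (∀ θ ∈ s, g θ = f θ) ∧ ∀ a, g a ∈ Icc A B := by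
  have hbdd : ∀ a : ℝ, BddAbove ((f '' {θ ∈ s | θ ≤ a}) ∪ {A}) := fun a =>
    ⟨B, by rintro y (⟨θ, ⟨hθ, -⟩, rfl⟩ | rfl); exacts [(hbd θ hθ).2, hAB]⟩
  have hne : ∀ a : ℝ, ((f '' {θ ∈ s | θ ≤ a}) ∪ {A}).Nonempty := fun a =>
    ⟨A, Or.inr rfl⟩
  refine ⟨fun a => sSup ((f '' {θ ∈ s | θ ≤ a}) ∪ {A}), ?_, ?_, ?_⟩
  · intro a b hab
    apply csSup_le_csSup (hbdd b) (hne a)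
    rintro y (⟨θ, ⟨hθ, hθa⟩, rfl⟩ | rfl)
    · exact Or.inl ⟨θ, ⟨hθ, hθa.trans hab⟩, rfl⟩
    · exact Or.inr rfl
  · intro θ hθ
    apply IsGreatest.csSup_eq
    constructor
    · exact Or.inl ⟨θ, ⟨hθ, le_refl θ⟩, rfl⟩
    · rintro y (⟨θ', ⟨hθ', hθ'θ⟩, rfl⟩ | rfl)
      exacts [hf hθ' hθ hθ'θ, (hbd θ hθ).1]
  · intro a
    constructor
    · exact le_csSup (hbdd a) (Or.inr rfl)
    · apply csSup_le (hne a)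
      rintro y (⟨θ, ⟨hθ, -⟩, rfl⟩ | rfl); exacts [(hbd θ hθ).2, hAB]

/-- A measurable IC and IR mechanism in the standard one-dimensional screening
problem. -/
def ICIRMech (Θ X : Set ℝ) (u : ℝ → ℝ → ℝ) (x t : ℝ → ℝ) : Prop :=
  Measurable x ∧ Measurable t ∧
    (∀ a ∈ Θ, x a ∈ X) ∧
    (∀ a ∈ Θ, ∀ a' ∈ Θ, u (x a) a - t a ≥ u (x a') a - t a') ∧
    (∀ a ∈ Θ, u (x a) a - t a ≥ 0)

/-- The principal's expected payoff. -/
def PPayoff (v : ℝ → ℝ → ℝ) (μ : Measure ℝ) (x t : ℝ → ℝ) : ℝ :=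
  ∫ a, (v (x a) a + t a) ∂μ

/-- **Existence (Lemma 7).** Any standard one-dimensional screening problem has a
solution: there is a measurable IC and IR mechanism with bounded transfer whose
principal payoff dominates that of every measurable IC and IR mechanism with
integrable transfer. -/
theorem stmt11
    (Θ X : Set ℝ) (hΘ : IsCompact Θ) (hX : IsCompact X) (hXne : X.Nonempty)
    (μ : Measure ℝ) (hμp : IsProbabilityMeasure μ) (hμsupp : μ Θᶜ = 0)
    (u v : ℝ → ℝ → ℝ)
    (huc : ContinuousOn (fun p : ℝ × ℝ => u p.1 p.2) (X ×ˢ Θ))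
    (hvc : ContinuousOn (fun p : ℝ × ℝ => v p.1 p.2) (X ×ˢ Θ))
    (humono : ∀ x ∈ X, ∀ a ∈ Θ, ∀ a' ∈ Θ, a ≤ a' → u x a ≤ u x a')
    (hSID : ∀ x ∈ X, ∀ x' ∈ X, x < x' → ∀ a ∈ Θ, ∀ a' ∈ Θ, a < a' →
      u x' a - u x a < u x' a' - u x a') :
    ∃ x t : ℝ → ℝ, ICIRMech Θ X u x t ∧ (∃ K : ℝ, ∀ a, |t a| ≤ K) ∧
      ∀ x' t' : ℝ → ℝ, ICIRMech Θ X u x' t' → Integrable t' μ →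
        PPayoff v μ x' t' ≤ PPayoff v μ x t := by
  classical
  have hΘmeas : MeasurableSet Θ := hΘ.isClosed.measurableSet
  have hae : ∀ᵐ a ∂μ, a ∈ Θ := by
    rw [ae_iff]; exact hμsupp
  have hΘne : Θ.Nonempty := by
    rw [nonempty_iff_ne_empty]
    rintro rfl
    simp [measure_univ] at hμsupp
  obtain ⟨x₀, hx₀⟩ := hXne
  have hΘne2 := hΘne
  obtain ⟨θ₁, hθ₁⟩ := hΘne2
  have hXΘcomp : IsCompact (X ×ˢ Θ) := hX.prod hΘ
  have hXΘcl : IsClosed (X ×ˢ Θ) := hXΘcomp.isClosed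
  -- Tietze extensions of u and v
  obtain ⟨uext, huextc, huexte⟩ : ∃ g : ℝ × ℝ → ℝ, Continuous g ∧
      ∀ p ∈ X ×ˢ Θ, g p = u p.1 p.2 := by
    obtain ⟨g, hg⟩ := ContinuousMap.exists_restrict_eq (Y := ℝ) hXΘcl
      ⟨(X ×ˢ Θ).restrict (fun p => u p.1 p.2), huc.restrict⟩
    exact ⟨g, g.continuous, fun p hp => by
      exact congrFun (congrArg ContinuousMap.toFun hg) ⟨p, hp⟩⟩
  obtain ⟨vext, hvextc, hvexte⟩ : ∃ g : ℝ × ℝ → ℝ, Continuous g ∧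
      ∀ p ∈ X ×ˢ Θ, g p = v p.1 p.2 := by
    obtain ⟨g, hg⟩ := ContinuousMap.exists_restrict_eq (Y := ℝ) hXΘcl
      ⟨(X ×ˢ Θ).restrict (fun p => v p.1 p.2), hvc.restrict⟩
    exact ⟨g, g.continuous, fun p hp => by
      exact congrFun (congrArg ContinuousMap.toFun hg) ⟨p, hp⟩⟩
  obtain ⟨Cu, hCu⟩ := hXΘcomp.exists_bound_of_continuousOn huc
  obtain ⟨Cv, hCv⟩ := hXΘcomp.exists_bound_of_continuousOn hvc
  have hCu' : ∀ y a, y ∈ X → a ∈ Θ → |u y a| ≤ Cu := fun y a hy ha => by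
    simpa [Real.norm_eq_abs] using hCu (y, a) ⟨hy, ha⟩
  have hCv' : ∀ y a, y ∈ X → a ∈ Θ → |v y a| ≤ Cv := fun y a hy ha => by
    simpa [Real.norm_eq_abs] using hCv (y, a) ⟨hy, ha⟩
  have hCu0 : 0 ≤ Cu := le_trans (abs_nonneg _) (hCu' x₀ θ₁ hx₀ hθ₁)
  have hCv0 : 0 ≤ Cv := le_trans (abs_nonneg _) (hCv' x₀ θ₁ hx₀ hθ₁)
  set K : ℝ := Cu + 1 with hK
  have hK0 : (0:ℝ) ≤ K := by rw [hK]; linarith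
  set A : ℝ := sInf X with hA
  set B : ℝ := sSup X with hB
  have hXsub : X ⊆ Icc A B := fun y hy => ⟨csInf_le hX.bddBelow hy, le_csSup hX.bddAbove hy⟩
  have hAB : A ≤ B := (hXsub hx₀).1.trans (hXsub hx₀).2
  -- integrability toolkit
  have hmeasv : ∀ x : ℝ → ℝ, Measurable x → Measurable (fun a => vext (x a, a)) :=
    fun x hx => hvextc.measurable.comp (hx.prodMk measurable_id)
  have hintv : ∀ x : ℝ → ℝ, Measurable x → (∀ a ∈ Θ, x a ∈ X) →
      Integrable (fun a => vext (x a, a)) μ := by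
    intro x hx hxX
    refine Integrable.mono' (integrable_const Cv) (hmeasv x hx).aestronglyMeasurable ?_
    filter_upwards [hae] with a ha
    rw [Real.norm_eq_abs, hvexte (x a, a) ⟨hxX a ha, ha⟩]
    exact hCv' (x a) a (hxX a ha) ha
  have hveq : ∀ x : ℝ → ℝ, (∀ a ∈ Θ, x a ∈ X) →
      (fun a => v (x a) a) =ᵐ[μ] (fun a => vext (x a, a)) := by
    intro x hxX; filter_upwards [hae] with a ha
    exact (hvexte (x a, a) ⟨hxX a ha, ha⟩).symm
  have hintvv : ∀ x : ℝ → ℝ, Measurable x → (∀ a ∈ Θ, x a ∈ X) →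
      Integrable (fun a => v (x a) a) μ := fun x hx hxX =>
    (hintv x hx hxX).congr (hveq x hxX).symm
  have hPP : ∀ x t : ℝ → ℝ, Measurable x → (∀ a ∈ Θ, x a ∈ X) → Integrable t μ →
      PPayoff v μ x t = (∫ a, vext (x a, a) ∂μ) + ∫ a, t a ∂μ := by
    intro x t hx hxX ht
    rw [PPayoff, show (fun a => v (x a) a + t a) = fun a => v (x a) a + t a from rfl]
    rw [integral_congr_ae (show (fun a => v (x a) a + t a) =ᵐ[μ]
      (fun a => vext (x a, a) + t a) by filter_upwards [hveq x hxX] with a h using by rw [h])]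
    exact integral_add (hintv x hx hxX) ht
  -- consequences of IC
  have halloc : ∀ x t : ℝ → ℝ, ICIRMech Θ X u x t → MonotoneOn x Θ := by
    intro x t hm a ha b hb hab
    rcases eq_or_lt_of_le hab with rfl | hlt
    · exact le_refl _
    by_contra hxx
    push_neg at hxx
    have h1 := hm.2.2.2.1 a ha b hb
    have h2 := hm.2.2.2.1 b hb a ha
    have h3 := hSID (x b) (hm.2.2.1 b hb) (x a) (hm.2.2.1 a ha) hxx a ha b hb hlt
    linarith
  have hrent : ∀ x t : ℝ → ℝ, ICIRMech Θ X u x t →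
      MonotoneOn (fun a => u (x a) a - t a) Θ := by
    intro x t hm a ha b hb hab
    have h1 := hm.2.2.2.1 b hb a ha
    have h2 := humono (x a) (hm.2.2.1 a ha) a ha b hb hab
    simp only
    linarith
  -- normalized ("good") mechanisms
  set Good : (ℝ → ℝ) → (ℝ → ℝ) → Prop := fun x t =>
    ICIRMech Θ X u x t ∧ (∀ a ∉ Θ, x a = x₀ ∧ t a = 0) ∧ (∀ a ∈ Θ, |t a| ≤ K)
    with hGoodDef
  have hGoodBound : ∀ x t, Good x t → ∀ a, |t a| ≤ K := by
    intro x t hg a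
    by_cases ha : a ∈ Θ
    · exact hg.2.2 a ha
    · rw [(hg.2.1 a ha).2]; simpa using hK0
  have hGoodInt : ∀ x t, Good x t → Integrable t μ := by
    intro x t hg
    refine Integrable.mono' (integrable_const K) hg.1.2.1.aestronglyMeasurable ?_
    exact Eventually.of_forall fun a => by
      rw [Real.norm_eq_abs]; exact hGoodBound x t hg a
  -- normalization: any IC-IR mechanism is weakly dominated by a good one
  have hnormalize : ∀ x t : ℝ → ℝ, ICIRMech Θ X u x t → Integrable t μ →
      ∃ x' t', Good x' t' ∧ PPayoff v μ x t ≤ PPayoff v μ x' t' := by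
    intro x t hm ht
    obtain ⟨hxm, htm, hxX, hIC, hIR⟩ := hm
    set U : ℝ → ℝ := fun a => u (x a) a - t a with hU
    have hUbdd : BddBelow (U '' Θ) := ⟨0, by rintro y ⟨θ, hθ, rfl⟩; exact hIR θ hθ⟩
    have hUne : (U '' Θ).Nonempty := hΘne.image U
    set c : ℝ := sInf (U '' Θ) with hc
    have hc0 : 0 ≤ c := le_csInf hUne (by rintro y ⟨θ, hθ, rfl⟩; exact hIR θ hθ)
    have hcle : ∀ a ∈ Θ, c ≤ U a := fun a ha => csInf_le hUbdd ⟨a, ha, rfl⟩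
    obtain ⟨y, ⟨θ₀, hθ₀, rfl⟩, hy⟩ := exists_lt_of_csInf_lt hUne
      (show sInf (U '' Θ) < c + 1 by rw [← hc]; linarith)
    set x' : ℝ → ℝ := Θ.piecewise x (fun _ => x₀) with hx'
    set t' : ℝ → ℝ := Θ.piecewise (fun a => t a + c) (fun _ => 0) with ht'
    have hx'eq : ∀ a ∈ Θ, x' a = x a := fun a ha => Set.piecewise_eq_of_mem _ _ _ ha
    have ht'eq : ∀ a ∈ Θ, t' a = t a + c := fun a ha => Set.piecewise_eq_of_mem _ _ _ ha
    have hmech : ICIRMech Θ X u x' t' := by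
      refine ⟨Measurable.piecewise hΘmeas hxm measurable_const,
        Measurable.piecewise hΘmeas (htm.add_const c) measurable_const, ?_, ?_, ?_⟩
      · intro a ha; rw [hx'eq a ha]; exact hxX a ha
      · intro a ha a' ha'
        rw [hx'eq a ha, ht'eq a ha, hx'eq a' ha', ht'eq a' ha']
        have h1 := hIC a ha a' ha'
        linarith
      · intro a ha
        rw [hx'eq a ha, ht'eq a ha]
        have h1 := hcle a ha
        simp only [hU] at h1
        linarith
    refine ⟨x', t', ⟨hmech, fun a ha =>
      ⟨Set.piecewise_eq_of_notMem _ _ _ ha, Set.piecewise_eq_of_notMem _ _ _ ha⟩, ?_⟩, ?_⟩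
    · intro a ha
      rw [ht'eq a ha, abs_le]
      constructor
      · have h1 := hIC θ₀ hθ₀ a ha
        have h3 := abs_le.1 (hCu' (x a) θ₀ (hxX a ha) hθ₀)
        simp only [hU] at hy
        rw [hK]; linarith
      · have h4 := hcle a ha
        have h3 := abs_le.1 (hCu' (x a) a (hxX a ha) ha)
        simp only [hU] at h4
        rw [hK]; linarith
    · have he : (fun a => v (x' a) a + t' a) =ᵐ[μ]
          (fun a => (v (x a) a + t a) + c) := by
        filter_upwards [hae] with a ha
        rw [hx'eq a ha, ht'eq a ha]; ring
      have hint : Integrable (fun a => v (x a) a + t a) μ := (hintvv x hxm hxX).add ht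
      calc PPayoff v μ x t = ∫ a, (v (x a) a + t a) ∂μ := rfl
        _ ≤ (∫ a, (v (x a) a + t a) ∂μ) + c := le_add_of_nonneg_right hc0
        _ = ∫ a, ((v (x a) a + t a) + c) ∂μ := by
            rw [integral_add hint (integrable_const c), integral_const]
            simp
        _ = PPayoff v μ x' t' := (integral_congr_ae he).symm
  -- a baseline good mechanism
  have hbase : ∃ x t, Good x t := by
    have hcm : ContinuousOn (fun θ => u x₀ θ) Θ :=
      huc.comp (Continuous.continuousOn (continuous_const.prodMk continuous_id))
        (fun θ hθ => ⟨hx₀, hθ⟩)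
    obtain ⟨θm, hθm, hmin⟩ := hΘ.exists_isMinOn hΘne hcm
    refine ⟨fun _ => x₀, Θ.piecewise (fun _ => u x₀ θm) (fun _ => 0),
      ⟨measurable_const, Measurable.piecewise hΘmeas measurable_const measurable_const,
        fun a _ => hx₀, ?_, ?_⟩, fun a ha => ⟨rfl, Set.piecewise_eq_of_notMem _ _ _ ha⟩, ?_⟩
    · intro a ha a' ha'
      rw [Set.piecewise_eq_of_mem _ _ _ ha, Set.piecewise_eq_of_mem _ _ _ ha']
    · intro a ha
      rw [Set.piecewise_eq_of_mem _ _ _ ha]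
      have := isMinOn_iff.1 hmin a ha
      linarith
    · intro a ha
      rw [Set.piecewise_eq_of_mem _ _ _ ha]
      have := hCu' x₀ θm hx₀ hθm
      rw [hK]
      have := abs_le.1 this
      rw [abs_le]; constructor <;> linarith [abs_le.1 (hCu' x₀ θm hx₀ hθm)]
  -- the supremum of good payoffs
  set P : Set ℝ := {p | ∃ x t, Good x t ∧ PPayoff v μ x t = p} with hPdef
  obtain ⟨xb, tb, hxb⟩ := hbase
  have hPne : P.Nonempty := ⟨_, xb, tb, hxb, rfl⟩
  have hPbdd : BddAbove P := by
    refine ⟨Cv + K, ?_⟩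
    rintro p ⟨x, t, hg, rfl⟩
    have hti : Integrable t μ := hGoodInt x t hg
    rw [hPP x t hg.1.1 hg.1.2.2.1 hti]
    have h1 : ∫ a, vext (x a, a) ∂μ ≤ Cv := by
      have h := integral_mono_ae (hintv x hg.1.1 hg.1.2.2.1) (integrable_const Cv)
        (by filter_upwards [hae] with a ha
            rw [hvexte (x a, a) ⟨hg.1.2.2.1 a ha, ha⟩]
            exact (abs_le.1 (hCv' (x a) a (hg.1.2.2.1 a ha) ha)).2)
      simpa [integral_const, measure_univ] using h
    have h2 : ∫ a, t a ∂μ ≤ K := by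
      have h := integral_mono_ae hti (integrable_const K)
        (Eventually.of_forall fun a => (abs_le.1 (hGoodBound x t hg a)).2)
      simpa [integral_const, measure_univ] using h
    linarith
  -- maximizing sequence
  obtain ⟨pseq, -, hpseqlim, hpseqmem⟩ := exists_seq_tendsto_sSup hPne hPbdd
  choose xs ts hGoods hPays using hpseqmem
  -- monotone extensions and Helly extraction
  have hxmem : ∀ n, ∀ a ∈ Θ, xs n a ∈ Icc A B := fun n a ha =>
    hXsub ((hGoods n).1.2.2.1 a ha)
  have hxmonoΘ : ∀ n, MonotoneOn (xs n) Θ := fun n => halloc _ _ (hGoods n).1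
  choose xbar hxbarM hxbarE hxbarB using fun n =>
    exists_monotone_extension hAB (hxmonoΘ n) (hxmem n)
  set Us : ℕ → ℝ → ℝ := fun n a => u (xs n a) a - ts n a with hUs
  have hUmonoΘ : ∀ n, MonotoneOn (Us n) Θ := fun n => hrent _ _ (hGoods n).1
  have hUmem : ∀ n, ∀ θ ∈ Θ, Us n θ ∈ Icc 0 (Cu + K) := by
    intro n θ hθ
    refine ⟨(hGoods n).1.2.2.2.2 θ hθ, ?_⟩
    have h2 := abs_le.1 (hCu' (xs n θ) θ ((hGoods n).1.2.2.1 θ hθ) hθ)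
    have h3 := abs_le.1 ((hGoods n).2.2 θ hθ)
    simp only [hUs]
    linarith
  have h0CuK : (0:ℝ) ≤ Cu + K := by linarith
  choose Ubar hUbarM hUbarE hUbarB using fun n =>
    exists_monotone_extension h0CuK (hUmonoΘ n) (hUmem n)
  obtain ⟨φ₁, hφ₁, g, hgM, hgconv⟩ := helly xbar hxbarM hxbarB
  obtain ⟨φ₂, hφ₂, W, hWM, hWconv⟩ := helly (fun k => Ubar (φ₁ k))
    (fun k => hUbarM _) (fun k a => hUbarB _ a)
  set σ : ℕ → ℕ := fun k => φ₁ (φ₂ k) with hσdef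
  have hσM : StrictMono σ := hφ₁.comp hφ₂
  have hxconv : ∀ θ ∈ Θ, Tendsto (fun k => xs (σ k) θ) atTop (𝓝 (g θ)) := by
    intro θ hθ
    have h := (hgconv θ).comp hφ₂.tendsto_atTop
    exact h.congr fun k => hxbarE (σ k) θ hθ
  have hgX : ∀ θ ∈ Θ, g θ ∈ X := fun θ hθ =>
    hX.isClosed.mem_of_tendsto (hxconv θ hθ)
      (Eventually.of_forall fun k => (hGoods (σ k)).1.2.2.1 θ hθ)
  have hUconv : ∀ θ ∈ Θ, Tendsto (fun k => Us (σ k) θ) atTop (𝓝 (W θ)) := by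
    intro θ hθ
    exact (hWconv θ).congr fun k => hUbarE (σ k) θ hθ
  -- the limit mechanism
  set xstar : ℝ → ℝ := Θ.piecewise g (fun _ => x₀) with hxstardef
  set tstar : ℝ → ℝ := Θ.piecewise (fun a => uext (g a, a) - W a) (fun _ => 0) with htstardef
  have hxstareq : ∀ a ∈ Θ, xstar a = g a := fun a ha => Set.piecewise_eq_of_mem _ _ _ ha
  have htstareq : ∀ a ∈ Θ, tstar a = u (g a) a - W a := fun a ha => by
    rw [htstardef, Set.piecewise_eq_of_mem _ _ _ ha, huexte (g a, a) ⟨hgX a ha, ha⟩]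
  have hucont_at : ∀ θ ∈ Θ, ∀ (y : ℕ → ℝ) (l : ℝ), (∀ k, y k ∈ X) → l ∈ X →
      Tendsto y atTop (𝓝 l) → Tendsto (fun k => u (y k) θ) atTop (𝓝 (u l θ)) := by
    intro θ hθ y l hy hl hconv
    have h1 : Tendsto (fun k => uext (y k, θ)) atTop (𝓝 (uext (l, θ))) :=
      (huextc.tendsto _).comp (hconv.prodMk_nhds tendsto_const_nhds)
    rw [show u l θ = uext (l, θ) from (huexte (l, θ) ⟨hl, hθ⟩).symm]
    exact h1.congr fun k => huexte (y k, θ) ⟨hy k, hθ⟩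
  have htconv : ∀ θ ∈ Θ, Tendsto (fun k => ts (σ k) θ) atTop (𝓝 (tstar θ)) := by
    intro θ hθ
    rw [htstareq θ hθ]
    have h1 := (hucont_at θ hθ (fun k => xs (σ k) θ) (g θ)
      (fun k => (hGoods (σ k)).1.2.2.1 θ hθ) (hgX θ hθ) (hxconv θ hθ)).sub (hUconv θ hθ)
    exact h1.congr fun k => by simp only [hUs]; ring
  have hulim : ∀ a ∈ Θ, ∀ θ ∈ Θ,
      Tendsto (fun k => u (xs (σ k) a) θ) atTop (𝓝 (u (xstar a) θ)) := by
    intro a ha θ hθ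
    rw [hxstareq a ha]
    exact hucont_at θ hθ (fun k => xs (σ k) a) (g a)
      (fun k => (hGoods (σ k)).1.2.2.1 a ha) (hgX a ha) (hxconv a ha)
  have hmechstar : ICIRMech Θ X u xstar tstar := by
    refine ⟨Measurable.piecewise hΘmeas hgM.measurable measurable_const,
      Measurable.piecewise hΘmeas
        ((huextc.measurable.comp (hgM.measurable.prodMk measurable_id)).sub hWM.measurable)
        measurable_const, ?_, ?_, ?_⟩
    · intro a ha; rw [hxstareq a ha]; exact hgX a ha
    · intro a ha a' ha'
      refine le_of_tendsto_of_tendsto' ((hulim a' ha' a ha).sub (htconv a' ha'))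
        ((hulim a ha a ha).sub (htconv a ha)) (fun k => ?_)
      exact (hGoods (σ k)).1.2.2.2.1 a ha a' ha'
    · intro a ha
      exact le_of_tendsto_of_tendsto' tendsto_const_nhds
        ((hulim a ha a ha).sub (htconv a ha))
        (fun k => (hGoods (σ k)).1.2.2.2.2 a ha)
  have hGoodstar : Good xstar tstar := by
    refine ⟨hmechstar, fun a ha =>
      ⟨Set.piecewise_eq_of_notMem _ _ _ ha, Set.piecewise_eq_of_notMem _ _ _ ha⟩, ?_⟩
    intro a ha
    exact le_of_tendsto_of_tendsto' ((htconv a ha).abs) tendsto_const_nhds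
      (fun k => (hGoods (σ k)).2.2 a ha)
  -- payoff convergence via dominated convergence
  set Fk : ℕ → ℝ → ℝ := fun k =>
    Θ.piecewise (fun a => vext (xs (σ k) a, a) + ts (σ k) a) (fun _ => 0) with hFkdef
  set Fl : ℝ → ℝ := Θ.piecewise (fun a => vext (xstar a, a) + tstar a) (fun _ => 0) with hFldef
  have hFkmeas : ∀ k, AEStronglyMeasurable (Fk k) μ := fun k =>
    (Measurable.piecewise hΘmeas ((hmeasv _ (hGoods (σ k)).1.1).add (hGoods (σ k)).1.2.1)
      measurable_const).aestronglyMeasurable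
  have hFkbd : ∀ k, ∀ᵐ a ∂μ, ‖Fk k a‖ ≤ Cv + K := by
    intro k
    refine Eventually.of_forall fun a => ?_
    by_cases ha : a ∈ Θ
    · rw [hFkdef]
      simp only [Set.piecewise_eq_of_mem _ _ _ ha]
      rw [Real.norm_eq_abs, hvexte (xs (σ k) a, a) ⟨(hGoods (σ k)).1.2.2.1 a ha, ha⟩]
      have h1 := abs_le.1 (hCv' (xs (σ k) a) a ((hGoods (σ k)).1.2.2.1 a ha) ha)
      have h2 := abs_le.1 ((hGoods (σ k)).2.2 a ha)
      rw [abs_le]; constructor <;> linarith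
    · rw [hFkdef]
      simp only [Set.piecewise_eq_of_notMem _ _ _ ha]
      rw [norm_zero]; linarith
  have hFconv : ∀ᵐ a ∂μ, Tendsto (fun k => Fk k a) atTop (𝓝 (Fl a)) := by
    refine Eventually.of_forall fun a => ?_
    by_cases ha : a ∈ Θ
    · have hv1 : Tendsto (fun k => vext (xs (σ k) a, a)) atTop (𝓝 (vext (xstar a, a))) := by
        rw [hxstareq a ha]
        exact (hvextc.tendsto _).comp ((hxconv a ha).prodMk_nhds tendsto_const_nhds)
      have := hv1.add (htconv a ha)
      simp only [hFkdef, hFldef, Set.piecewise_eq_of_mem _ _ _ ha]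
      exact this
    · simp only [hFkdef, hFldef, Set.piecewise_eq_of_notMem _ _ _ ha]
      exact tendsto_const_nhds
  have hDCT : Tendsto (fun k => ∫ a, Fk k a ∂μ) atTop (𝓝 (∫ a, Fl a ∂μ)) :=
    tendsto_integral_of_dominated_convergence (fun _ => Cv + K) hFkmeas
      (integrable_const _) hFkbd hFconv
  have hFkeq : ∀ k, ∫ a, Fk k a ∂μ = PPayoff v μ (xs (σ k)) (ts (σ k)) := by
    intro k
    refine integral_congr_ae ?_
    filter_upwards [hae] with a ha
    rw [hFkdef]
    simp only [Set.piecewise_eq_of_mem _ _ _ ha]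
    rw [hvexte (xs (σ k) a, a) ⟨(hGoods (σ k)).1.2.2.1 a ha, ha⟩]
  have hFleq : ∫ a, Fl a ∂μ = PPayoff v μ xstar tstar := by
    refine integral_congr_ae ?_
    filter_upwards [hae] with a ha
    rw [hFldef]
    simp only [Set.piecewise_eq_of_mem _ _ _ ha]
    rw [hvexte (xstar a, a) ⟨hmechstar.2.2.1 a ha, ha⟩]
  have hlim1 : Tendsto (fun k => PPayoff v μ (xs (σ k)) (ts (σ k))) atTop
      (𝓝 (PPayoff v μ xstar tstar)) := by
    rw [← hFleq]
    exact hDCT.congr fun k => hFkeq k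
  have hlim2 : Tendsto (fun k => PPayoff v μ (xs (σ k)) (ts (σ k))) atTop
      (𝓝 (sSup P)) := by
    have h := hpseqlim.comp hσM.tendsto_atTop
    exact h.congr fun k => (hPays (σ k)).symm
  have hstar_eq : PPayoff v μ xstar tstar = sSup P := tendsto_nhds_unique hlim1 hlim2
  refine ⟨xstar, tstar, hmechstar, ⟨K, hGoodBound _ _ hGoodstar⟩, ?_⟩
  intro x' t' hm' hti'
  obtain ⟨x'', t'', hg'', hle⟩ := hnormalize x' t' hm' hti'
  calc PPayoff v μ x' t' ≤ PPayoff v μ x'' t'' := hle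
    _ ≤ sSup P := le_csSup hPbdd ⟨x'', t'', hg'', rfl⟩
    _ = PPayoff v μ xstar tstar := hstar_eq.symm
end
end

section
/- (Shift lemma on a monotonic path.) Let (x, y, t) : Θ^A → X × Y × ℝ be a measurable mechanism that is IC and IR on the path. Define the shifted mechanism by x̃ = x, ỹ(θ^A) = y₀ for all θ^A, and t̃(θ^A) = t(θ^A) − u^B(y(θ^A), h(θ^A)). Then (x̃, ỹ, t̃) satisfies all downward IC constraints (the IC inequalities for θ^A > θ̂^A) and all IR constraints; moreover, for any Borel probability measure on Θ^A, the principal's expected payoff under (x̃, ỹ, t̃) with truthful reporting is at least that under (x, y, t), and strictly greater if the instruments are strictly costly and the event {y(θ^A) ≠ y₀} has positive probability. -/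
open MeasureTheory Set

noncomputable section

/-- **Shift lemma on a monotonic path (Lemma 2).** Shifting the costly-component
payoffs into transfers preserves all downward IC constraints and all IR constraints,
and weakly (strictly, under strictly costly instruments used with positive
probability) increases the principal's expected payoff under truthful reporting. -/
theorem stmt13
    (N : ℕ) (Y : Type) [MeasurableSpace Y] (y₀ : Y) (hy₀ : MeasurableSet ({y₀} : Set Y))
    (ΘA : Set ℝ) (hΘA : IsCompact ΘA)
    (X : Set ℝ) (hX : IsCompact X)
    (h : ℝ → (Fin N → ℝ)) (hhmeas : Measurable h)
    (hhmono : ∀ a ∈ ΘA, ∀ a' ∈ ΘA, a ≤ a' → h a ≤ h a')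
    (uA vA : ℝ → ℝ → ℝ)
    (huAc : ContinuousOn (fun p : ℝ × ℝ => uA p.1 p.2) (X ×ˢ ΘA))
    (hvAc : ContinuousOn (fun p : ℝ × ℝ => vA p.1 p.2) (X ×ˢ ΘA))
    (uB vB : Y → (Fin N → ℝ) → ℝ)
    (huBmeas : Measurable (fun p : Y × (Fin N → ℝ) => uB p.1 p.2))
    (hvBmeas : Measurable (fun p : Y × (Fin N → ℝ) => vB p.1 p.2))
    (huBbdd : ∃ M, ∀ y b, |uB y b| ≤ M)
    (hvBbdd : ∃ M, ∀ y b, |vB y b| ≤ M)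
    (huBmono : ∀ y : Y, Monotone (uB y))
    (hsB : ∀ y b, uB y b + vB y b ≤ 0)
    (huB0 : ∀ b, uB y₀ b = 0) (hvB0 : ∀ b, vB y₀ b = 0)
    -- a mechanism on the path, IC and IR
    (x : ℝ → ℝ) (y : ℝ → Y) (t : ℝ → ℝ)
    (hxmeas : Measurable x) (hymeas : Measurable y) (htmeas : Measurable t)
    (hxX : ∀ a ∈ ΘA, x a ∈ X)
    (hIC : ∀ a ∈ ΘA, ∀ a' ∈ ΘA,
      uA (x a) a + uB (y a) (h a) - t a ≥ uA (x a') a + uB (y a') (h a) - t a')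
    (hIR : ∀ a ∈ ΘA, uA (x a) a + uB (y a) (h a) - t a ≥ 0) :
    -- the shifted mechanism (x, ỹ ≡ y₀, t̃ = t − uB(y·, h·)) satisfies all
    -- downward IC constraints …
    (∀ a ∈ ΘA, ∀ a' ∈ ΘA, a' < a →
      uA (x a) a + uB y₀ (h a) - (t a - uB (y a) (h a)) ≥
        uA (x a') a + uB y₀ (h a) - (t a' - uB (y a') (h a'))) ∧
    -- … and all IR constraints …
    (∀ a ∈ ΘA, uA (x a) a + uB y₀ (h a) - (t a - uB (y a) (h a)) ≥ 0) ∧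
    -- … and weakly improves the principal's payoff for any type distribution on the
    -- path, strictly so when the instruments are strictly costly and used with
    -- positive probability
    (∀ μ : Measure ℝ, IsProbabilityMeasure μ → μ ΘAᶜ = 0 →
      Integrable (fun a => vA (x a) a + vB (y a) (h a) + t a) μ →
      (∫ a, (vA (x a) a + vB y₀ (h a) + (t a - uB (y a) (h a))) ∂μ ≥
        ∫ a, (vA (x a) a + vB (y a) (h a) + t a) ∂μ) ∧
      ((∀ y' : Y, y' ≠ y₀ → ∀ b, uB y' b + vB y' b < 0) →
        μ {a | y a ≠ y₀} ≠ 0 →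
        ∫ a, (vA (x a) a + vB y₀ (h a) + (t a - uB (y a) (h a))) ∂μ >
          ∫ a, (vA (x a) a + vB (y a) (h a) + t a) ∂μ)) := by

  obtain ⟨Mu, hMu⟩ := huBbdd
  obtain ⟨Mv, hMv⟩ := hvBbdd
  refine ⟨?_, ?_, ?_⟩
  · intro a ha a' ha' hlt
    have h1 := hIC a ha a' ha'
    have h2 : uB (y a') (h a') ≤ uB (y a') (h a) :=
      huBmono (y a') (hhmono a' ha' a ha hlt.le)
    linarith
  · intro a ha
    have h1 := hIR a ha
    have h0 := huB0 (h a)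
    linarith
  · intro μ hμ hμc hint
    set g : ℝ → ℝ := fun a => uB (y a) (h a) + vB (y a) (h a) with hg
    have hpm : Measurable (fun a : ℝ => (y a, h a)) := hymeas.prodMk hhmeas
    have hgm : Measurable g := (huBmeas.comp hpm).add (hvBmeas.comp hpm)
    have hgint : Integrable g μ := by
      refine Integrable.mono' (integrable_const (Mu + Mv)) hgm.aestronglyMeasurable
        (Filter.Eventually.of_forall fun a => ?_)
      calc |g a| ≤ |uB (y a) (h a)| + |vB (y a) (h a)| := abs_add_le _ _
        _ ≤ Mu + Mv := add_le_add (hMu _ _) (hMv _ _)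
    have hfun : (fun a => vA (x a) a + vB y₀ (h a) + (t a - uB (y a) (h a))) =
        fun a => (vA (x a) a + vB (y a) (h a) + t a) - g a := by
      funext a
      have := hvB0 (h a)
      simp only [hg]
      ring_nf
      linarith
    have hsplit : ∫ a, (vA (x a) a + vB y₀ (h a) + (t a - uB (y a) (h a))) ∂μ =
        (∫ a, (vA (x a) a + vB (y a) (h a) + t a) ∂μ) - ∫ a, g a ∂μ := by
      rw [hfun, integral_sub hint hgint]
    have hgle : ∫ a, g a ∂μ ≤ 0 := integral_nonpos fun a => hsB _ _
    constructor
    · rw [hsplit]; linarith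
    · intro hsc hpos
      have hglt : ∫ a, g a ∂μ < 0 := by
        rcases hgle.lt_or_eq with hlt | heq
        · exact hlt
        · exfalso
          have hnn : 0 ≤ fun a => -g a := fun a => by
            simpa using hsB (y a) (h a)
          have hzero : ∫ a, -g a ∂μ = 0 := by
            rw [integral_neg, heq, neg_zero]
          have hae : (fun a => -g a) =ᵐ[μ] 0 :=
            (integral_eq_zero_iff_of_nonneg hnn hgint.neg).mp hzero
          have hnull : μ {a | g a ≠ 0} = 0 := by
            have := hae
            rw [Filter.EventuallyEq, ae_iff] at this
            refine measure_mono_null (fun a hax => ?_) this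
            simp only [Set.mem_setOf_eq] at hax ⊢
            intro hcon
            exact hax (neg_eq_zero.mp (by simpa using hcon))
          have hsub : {a | y a ≠ y₀} ⊆ {a | g a ≠ 0} := fun a hay =>
            ne_of_lt (hsc (y a) hay (h a))
          exact hpos (measure_mono_null hsub hnull)
      rw [hsplit]; linarith
end
end
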